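/- arXiv:2302.08114 — 4 statements merged into one kernel-verified Lean document; each statement's English description precedes it below -/
import Mathlib

section
/- (Multiplier identity.) Let L > 0, ε₁ > 0, and define φ(x) = ε₁ for |x| ≤ L and φ(x) = Lε₁/|x| for |x| ≥ L (so φ is Lipschitz continuous on ℝ). Let u be a smooth classical solution of u_tt − u_xx + V(x)u + a(x)u_t = 0 with smooth compactly supported data, vanishing for |x| ≥ R on each time interval [0,T]. Then for every t > 0: (d/dt) ∫_ℝ u_t(t,x) φ(x) x u_x(t,x) dx + (1/2)∫_ℝ (φ(x) + φ'(x)x) u_t(t,x)² dx + (1/2)∫_ℝ (φ(x) + φ'(x)x) u_x(t,x)² dx − (1/2)∫_ℝ (V(x)φ(x) + V(x)φ'(x)x) u(t,x)² dx − (1/2)∫_ℝ V'(x)φ(x)x u(t,x)² dx + ∫_ℝ a(x) u_t(t,x) φ(x) x u_x(t,x) dx = 0, where φ' denotes the (almost-everywhere defined) derivative of φ. -/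
open MeasureTheory

noncomputable def ut (u : ℝ → ℝ → ℝ) (t x : ℝ) : ℝ := deriv (fun s => u s x) t

noncomputable def ux (u : ℝ → ℝ → ℝ) (t x : ℝ) : ℝ := deriv (fun y => u t y) x

noncomputable def utt (u : ℝ → ℝ → ℝ) (t x : ℝ) : ℝ := deriv (fun s => ut u s x) t

noncomputable def uxx (u : ℝ → ℝ → ℝ) (t x : ℝ) : ℝ := deriv (fun y => ux u t y) x

noncomputable def Eu (V : ℝ → ℝ) (u : ℝ → ℝ → ℝ) (t : ℝ) : ℝ :=
  (1/2) * ((∫ x, (ut u t x)^2) + (∫ x, (ux u t x)^2) + ∫ x, V x * (u t x)^2)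

/-- `u` is a smooth classical solution of `u_tt - u_xx + V u + a u_t = 0` with smooth
compactly supported initial data `(u₀, u₁)`, vanishing for large `|x|` on each `[0,T]`. -/
def IsSmoothSolution (V a : ℝ → ℝ) (u : ℝ → ℝ → ℝ) (u₀ u₁ : ℝ → ℝ) : Prop :=
  ContDiff ℝ (⊤ : ℕ∞) (fun p : ℝ × ℝ => u p.1 p.2) ∧
  (∀ t > (0:ℝ), ∀ x : ℝ, utt u t x - uxx u t x + V x * u t x + a x * ut u t x = 0) ∧
  (∀ x : ℝ, u 0 x = u₀ x) ∧ (∀ x : ℝ, ut u 0 x = u₁ x) ∧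
  ContDiff ℝ (⊤ : ℕ∞) u₀ ∧ HasCompactSupport u₀ ∧
  ContDiff ℝ (⊤ : ℕ∞) u₁ ∧ HasCompactSupport u₁ ∧
  (∀ T > (0:ℝ), ∃ R > (0:ℝ), ∀ t ∈ Set.Icc (0:ℝ) T, ∀ x : ℝ, R ≤ |x| → u t x = 0)

/-- The multiplier function `φ`. -/
noncomputable def phi (L ε₁ : ℝ) (x : ℝ) : ℝ := if |x| ≤ L then ε₁ else L * ε₁ / |x|

/-- The (a.e. defined) derivative of `φ`. -/
noncomputable def phi' (L ε₁ : ℝ) (x : ℝ) : ℝ :=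
  if |x| ≤ L then 0 else -(L * ε₁) * Real.sign x / x ^ 2

/-- partial derivative in the first variable -/
noncomputable def pd1 (G : ℝ × ℝ → ℝ) : ℝ × ℝ → ℝ := fun p => fderiv ℝ G p (1, 0)
/-- partial derivative in the second variable -/
noncomputable def pd2 (G : ℝ × ℝ → ℝ) : ℝ × ℝ → ℝ := fun p => fderiv ℝ G p (0, 1)

lemma one_le_coe_top : (1 : WithTop ℕ∞) ≤ ((⊤:ℕ∞) : WithTop ℕ∞) := by
  exact_mod_cast (le_top : (1:ℕ∞) ≤ ⊤)

lemma add_one_le_coe_top : ((⊤:ℕ∞) : WithTop ℕ∞) + 1 ≤ ((⊤:ℕ∞) : WithTop ℕ∞) :=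
  le_of_eq (by norm_num)

lemma hasDerivAt_par_fst (G : ℝ × ℝ → ℝ) (hG : ContDiff ℝ (⊤ : ℕ∞) G) (t x : ℝ) :
    HasDerivAt (fun s => G (s, x)) (pd1 G (t, x)) t := by
  have h1 : HasDerivAt (fun s : ℝ => (s, x)) ((1 : ℝ), (0 : ℝ)) t :=
    (hasDerivAt_id t).prodMk (hasDerivAt_const t x)
  exact ((hG.differentiable (by simp) (t, x)).hasFDerivAt).comp_hasDerivAt t h1

lemma hasDerivAt_par_snd (G : ℝ × ℝ → ℝ) (hG : ContDiff ℝ (⊤ : ℕ∞) G) (t x : ℝ) :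
    HasDerivAt (fun y => G (t, y)) (pd2 G (t, x)) x := by
  have h1 : HasDerivAt (fun y : ℝ => (t, y)) ((0 : ℝ), (1 : ℝ)) x :=
    (hasDerivAt_const x t).prodMk (hasDerivAt_id x)
  exact ((hG.differentiable (by simp) (t, x)).hasFDerivAt).comp_hasDerivAt x h1

lemma contDiff_pd1 {G : ℝ × ℝ → ℝ} (hG : ContDiff ℝ (⊤ : ℕ∞) G) :
    ContDiff ℝ (⊤ : ℕ∞) (pd1 G) :=
  (hG.fderiv_right add_one_le_coe_top).clm_apply contDiff_const

lemma contDiff_pd2 {G : ℝ × ℝ → ℝ} (hG : ContDiff ℝ (⊤ : ℕ∞) G) :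
    ContDiff ℝ (⊤ : ℕ∞) (pd2 G) :=
  (hG.fderiv_right add_one_le_coe_top).clm_apply contDiff_const

lemma mixed_symm (G : ℝ × ℝ → ℝ) (hG : ContDiff ℝ (⊤ : ℕ∞) G) (p : ℝ × ℝ) :
    pd2 (pd1 G) p = pd1 (pd2 G) p := by
  have hd : Differentiable ℝ (fderiv ℝ G) :=
    (hG.fderiv_right add_one_le_coe_top).differentiable (by simp)
  have happ : ∀ v : ℝ × ℝ,
      fderiv ℝ (fun q => fderiv ℝ G q v) p = (fderiv ℝ (fderiv ℝ G) p).flip v := by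
    intro v
    rw [show (fun q => fderiv ℝ G q v) = fun q => (fderiv ℝ G q) ((fun _ => v) q) from rfl,
      fderiv_clm_apply (hd p) (differentiableAt_const v)]
    simp
  show fderiv ℝ (fun q => fderiv ℝ G q (1,0)) p (0,1)
    = fderiv ℝ (fun q => fderiv ℝ G q (0,1)) p (1,0)
  rw [happ, happ]
  simp only [ContinuousLinearMap.flip_apply]
  exact second_derivative_symmetric
    (fun y => (hG.differentiable (by simp) y).hasFDerivAt) (hd p).hasFDerivAt _ _
lemma psi_eq (L ε₁ : ℝ) (hL : 0 < L) (x : ℝ) :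
    phi L ε₁ x * x = ε₁ * max (-L) (min L x) := by
  unfold phi
  rcases le_or_gt (|x|) L with h | h
  · rw [if_pos h]
    rw [abs_le] at h
    rw [min_eq_right h.2, max_eq_right h.1]
  · rw [if_neg (not_le.mpr h)]
    rcases lt_or_ge x 0 with hx | hx
    · rw [abs_of_neg hx] at h ⊢
      rw [min_eq_right (by linarith), max_eq_left (by linarith)]
      have hx0 : x ≠ 0 := ne_of_lt hx
      rw [div_mul_eq_mul_div, div_eq_iff (neg_ne_zero.mpr hx0)]
      ring
    · rw [abs_of_nonneg hx] at h ⊢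
      rw [min_eq_left (by linarith), max_eq_right (by linarith)]
      have hx0 : x ≠ 0 := by intro h0; rw [h0] at h; linarith
      rw [div_mul_eq_mul_div, div_eq_iff hx0]
      ring

lemma w_eq (L ε₁ : ℝ) (hL : 0 < L) (x : ℝ) :
    phi L ε₁ x + phi' L ε₁ x * x = if |x| ≤ L then ε₁ else 0 := by
  unfold phi phi'
  rcases le_or_gt (|x|) L with h | h
  · simp [h]
  · rw [if_neg (not_le.mpr h), if_neg (not_le.mpr h), if_neg (not_le.mpr h)]
    rcases lt_or_ge x 0 with hx | hx
    · rw [abs_of_neg hx, Real.sign_of_neg hx]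
      have hx0 : x ≠ 0 := ne_of_lt hx
      rw [div_mul_eq_mul_div, div_add_div _ _ (neg_ne_zero.mpr hx0) (pow_ne_zero 2 hx0),
        div_eq_zero_iff]
      left; ring
    · have hx' : 0 < x := by
        rcases eq_or_lt_of_le hx with h0 | h0
        · exfalso; rw [← h0] at h; simp at h; linarith
        · exact h0
      rw [abs_of_nonneg hx, Real.sign_of_pos hx']
      have hx0 : x ≠ 0 := ne_of_gt hx'
      rw [div_mul_eq_mul_div, div_add_div _ _ hx0 (pow_ne_zero 2 hx0), div_eq_zero_iff]
      left; ring

lemma vanish_outside {f : ℝ → ℝ} {R : ℝ} (h0 : ∀ x, R ≤ |x| → f x = 0) (x : ℝ)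
    (hx : x ∉ Set.Ioc (-R) R) : f x = 0 := by
  apply h0
  rcases le_or_gt R 0 with hR | hR
  · exact hR.trans (abs_nonneg x)
  · rcases not_and_or.mp hx with h | h
    · push_neg at h
      rw [abs_of_neg (by linarith)]
      linarith
    · push_neg at h
      exact (h.trans_le (le_abs_self x)).le

lemma integrable_of_vanish {f : ℝ → ℝ} (hf : Continuous f) (R : ℝ)
    (h0 : ∀ x, R ≤ |x| → f x = 0) : Integrable f := by
  refine hf.integrable_of_hasCompactSupport (HasCompactSupport.intro (isCompact_Icc
    (a := -R) (b := R)) (fun x hx => h0 x ?_))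
  rcases le_or_gt R 0 with hR | hR
  · exact hR.trans (abs_nonneg x)
  · rcases not_and_or.mp hx with h | h
    · push_neg at h
      rw [abs_of_neg (by linarith)]
      linarith
    · push_neg at h
      exact le_trans (le_of_lt h) (le_abs_self x)

lemma integral_w (L ε₁ : ℝ) (hL : 0 < L) (g : ℝ → ℝ) :
    ∫ x, (phi L ε₁ x + phi' L ε₁ x * x) * g x = ε₁ * ∫ x in (-L)..L, g x := by
  have h1 : ∀ x, (phi L ε₁ x + phi' L ε₁ x * x) * g x
      = Set.indicator (Set.Icc (-L) L) (fun x => ε₁ * g x) x := by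
    intro x
    rw [w_eq L ε₁ hL x]
    by_cases h : |x| ≤ L
    · rw [if_pos h, Set.indicator_of_mem (by rw [Set.mem_Icc]; exact abs_le.mp h)]
    · rw [if_neg h, Set.indicator_of_notMem (by rw [Set.mem_Icc, ← abs_le]; exact h), zero_mul]
  simp_rw [h1]
  rw [MeasureTheory.integral_indicator measurableSet_Icc,
    MeasureTheory.integral_Icc_eq_integral_Ioc,
    ← intervalIntegral.integral_of_le (by linarith : -L ≤ L),
    intervalIntegral.integral_const_mul]

lemma integral_psi (L ε₁ R : ℝ) (hL : 0 < L) (hR : L < R) (h h' : ℝ → ℝ)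
    (hd : ∀ x, HasDerivAt h (h' x) x) (hc : Continuous h')
    (h0 : ∀ x, R ≤ |x| → h x = 0) (h0' : ∀ x, R ≤ |x| → h' x = 0) :
    ∫ x, (phi L ε₁ x * x) * h' x = -(ε₁ * ∫ x in (-L)..L, h x) := by
  have hRL : -R ≤ -L := by linarith
  set ψ : ℝ → ℝ := fun x => ε₁ * max (-L) (min L x) with hψdef
  have hψc : Continuous ψ :=
    continuous_const.mul (continuous_const.max (continuous_const.min continuous_id))
  have hii : ∀ a b : ℝ, IntervalIntegrable (fun x => ψ x * h' x) volume a b :=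
    fun a b => (hψc.mul hc).intervalIntegrable a b
  have key : (fun x => phi L ε₁ x * x * h' x) = fun x => ψ x * h' x := by
    funext x; rw [psi_eq L ε₁ hL x]
  rw [key]
  have hindic : (fun x => ψ x * h' x)
      = Set.indicator (Set.Ioc (-R) R) (fun x => ψ x * h' x) := by
    funext x
    by_cases hx : x ∈ Set.Ioc (-R) R
    · rw [Set.indicator_of_mem hx]
    · rw [Set.indicator_of_notMem hx, vanish_outside h0' x hx, mul_zero]
  rw [hindic, MeasureTheory.integral_indicator measurableSet_Ioc,
    ← intervalIntegral.integral_of_le (by linarith : -R ≤ R)]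
  rw [← intervalIntegral.integral_add_adjacent_intervals (b := -L) (hii _ _) (hii _ _),
    ← intervalIntegral.integral_add_adjacent_intervals (a := -L) (b := L) (hii _ _) (hii _ _)]
  have p1 : ∫ x in (-R)..(-L), ψ x * h' x = (ε₁ * -L) * h (-L) := by
    rw [intervalIntegral.integral_congr (g := fun x => (ε₁ * -L) * h' x) ?_,
      intervalIntegral.integral_const_mul,
      intervalIntegral.integral_eq_sub_of_hasDerivAt (fun x _ => hd x)
        (hc.intervalIntegrable _ _)]
    · rw [h0 (-R) (by rw [abs_neg, abs_of_pos (by linarith)]), sub_zero]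
    · intro x hx
      rw [Set.uIcc_of_le hRL, Set.mem_Icc] at hx
      have : min L x = x := min_eq_right (by linarith)
      simp only [hψdef, this, max_eq_left hx.2]
  have p3 : ∫ x in L..R, ψ x * h' x = -((ε₁ * L) * h L) := by
    rw [intervalIntegral.integral_congr (g := fun x => (ε₁ * L) * h' x) ?_,
      intervalIntegral.integral_const_mul,
      intervalIntegral.integral_eq_sub_of_hasDerivAt (fun x _ => hd x)
        (hc.intervalIntegrable _ _)]
    · rw [h0 R (by rw [abs_of_pos (by linarith)]), zero_sub, mul_neg]
    · intro x hx
      rw [Set.uIcc_of_le (by linarith : L ≤ R), Set.mem_Icc] at hx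
      have h1 : min L x = L := min_eq_left hx.1
      simp only [hψdef, h1, max_eq_right (by linarith : -L ≤ L)]
  have p2 : ∫ x in (-L)..L, ψ x * h' x
      = (ε₁ * L) * h L - (ε₁ * -L) * h (-L) - ε₁ * ∫ x in (-L)..L, h x := by
    have heq : ∀ x ∈ Set.uIcc (-L) L, ψ x = ε₁ * x := by
      intro x hx
      rw [Set.uIcc_of_le (by linarith : -L ≤ L), Set.mem_Icc] at hx
      simp only [hψdef, min_eq_right hx.2, max_eq_right hx.1]
    rw [intervalIntegral.integral_congr (g := fun x => (ε₁ * x) * h' x)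
      (fun x hx => by rw [heq x hx]),
      intervalIntegral.integral_mul_deriv_eq_deriv_mul
        (u := fun x => ε₁ * x) (u' := fun _ => ε₁) (v := h) (v' := h')
        (fun x _ => by simpa using (hasDerivAt_id x).const_mul ε₁) (fun x _ => hd x)
        (intervalIntegrable_const) (hc.intervalIntegrable _ _),
      intervalIntegral.integral_const_mul]
  rw [p1, p2, p3]
  ring

/-- **Multiplier identity (2.4).** For `φ(x) = ε₁` on `|x| ≤ L`, `φ(x) = Lε₁/|x|` on
`|x| ≥ L`, and a smooth classical solution `u` of `u_tt − u_xx + V u + a u_t = 0` with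
smooth compactly supported data, vanishing for large `|x|` on each `[0,T]`,
for every `t > 0`:
`(d/dt) ∫ u_t φ x u_x dx + (1/2)∫ (φ + φ'x) u_t² dx + (1/2)∫ (φ + φ'x) u_x² dx
 − (1/2)∫ (Vφ + Vφ'x) u² dx − (1/2)∫ V'φx u² dx + ∫ a u_t φ x u_x dx = 0`. -/
theorem multiplier_identity
    (a V : ℝ → ℝ) (u : ℝ → ℝ → ℝ) (u₀ u₁ : ℝ → ℝ) (L ε₁ : ℝ)
    (hL : 0 < L) (hε₁ : 0 < ε₁)
    (ha_cont : Continuous a) (ha_bdd : ∃ M, ∀ x, |a x| ≤ M) (ha_nonneg : ∀ x, 0 ≤ a x)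
    (hV : ContDiff ℝ 1 V) (hV_bdd : ∃ M, ∀ x, |V x| ≤ M)
    (hV'_bdd : ∃ M, ∀ x, |deriv V x| ≤ M) (hV_pos : ∀ x, 0 < V x)
    (hsol : IsSmoothSolution V a u u₀ u₁) :
    ∀ t > (0:ℝ),
      deriv (fun τ => ∫ x, ut u τ x * phi L ε₁ x * x * ux u τ x) t
        + (1/2) * (∫ x, (phi L ε₁ x + phi' L ε₁ x * x) * (ut u t x) ^ 2)
        + (1/2) * (∫ x, (phi L ε₁ x + phi' L ε₁ x * x) * (ux u t x) ^ 2)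
        - (1/2) * (∫ x, (V x * phi L ε₁ x + V x * phi' L ε₁ x * x) * (u t x) ^ 2)
        - (1/2) * (∫ x, deriv V x * phi L ε₁ x * x * (u t x) ^ 2)
        + (∫ x, a x * ut u t x * phi L ε₁ x * x * ux u t x) = 0 := by
  intro t ht
  obtain ⟨hU, hpde, -, -, -, -, -, -, hsupp⟩ := hsol
  set U : ℝ × ℝ → ℝ := fun p => u p.1 p.2 with hUdef
  -- derivative identification
  have eq_ut : ∀ s y : ℝ, ut u s y = pd1 U (s, y) :=
    fun s y => (hasDerivAt_par_fst U hU s y).deriv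
  have eq_ux : ∀ s y : ℝ, ux u s y = pd2 U (s, y) :=
    fun s y => (hasDerivAt_par_snd U hU s y).deriv
  have eq_utt : ∀ s y : ℝ, utt u s y = pd1 (pd1 U) (s, y) := by
    intro s y
    show deriv (fun σ => ut u σ y) s = _
    rw [show (fun σ => ut u σ y) = fun σ => pd1 U (σ, y) from funext fun σ => eq_ut σ y]
    exact (hasDerivAt_par_fst (pd1 U) (contDiff_pd1 hU) s y).deriv
  have eq_uxx : ∀ s y : ℝ, uxx u s y = pd2 (pd2 U) (s, y) := by
    intro s y
    show deriv (fun z => ux u s z) y = _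
    rw [show (fun z => ux u s z) = fun z => pd2 U (s, z) from funext fun z => eq_ux s z]
    exact (hasDerivAt_par_snd (pd2 U) (contDiff_pd2 hU) s y).deriv
  -- the PDE in pd-language
  have hPDE : ∀ x : ℝ, pd1 (pd1 U) (t, x)
      = pd2 (pd2 U) (t, x) - V x * u t x - a x * pd1 U (t, x) := by
    intro x
    have := hpde t ht x
    rw [eq_utt, eq_uxx, eq_ut] at this
    linarith
  -- support
  obtain ⟨R₀, hR₀pos, hR₀⟩ := hsupp (t + 1) (by linarith)
  set R : ℝ := max (R₀ + 1) (L + 1) with hRdef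
  have hLR : L < R := lt_of_lt_of_le (by linarith) (le_max_right _ _)
  have hR₀R : R₀ + 1 ≤ R := le_max_left _ _
  have hRpos : 0 < R := by linarith
  have hUt0 : ∀ s : ℝ, 0 < s → s < t + 1 → ∀ y : ℝ, R₀ ≤ |y| → pd1 U (s, y) = 0 := by
    intro s hs1 hs2 y hy
    rw [← eq_ut s y]
    have hev : (fun σ => u σ y) =ᶠ[nhds s] (fun _ => (0:ℝ)) := by
      filter_upwards [Ioo_mem_nhds hs1 hs2] with σ hσ
      exact hR₀ σ ⟨hσ.1.le, hσ.2.le⟩ y hy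
    show deriv (fun σ => u σ y) s = 0
    rw [hev.deriv_eq, deriv_const]
  have hUx0 : ∀ s : ℝ, 0 ≤ s → s ≤ t + 1 → ∀ y : ℝ, R₀ + 1 ≤ |y| → pd2 U (s, y) = 0 := by
    intro s hs1 hs2 y hy
    rw [← eq_ux s y]
    have hev : (fun z => u s z) =ᶠ[nhds y] (fun _ => (0:ℝ)) := by
      filter_upwards [Metric.ball_mem_nhds y one_pos] with z hz
      apply hR₀ s ⟨hs1, hs2⟩ z
      have h1 : |z - y| < 1 := by rw [← Real.dist_eq]; exact hz
      have h2 := abs_sub_abs_le_abs_sub y z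
      rw [abs_sub_comm y z] at h2
      linarith
    show deriv (fun z => u s z) y = 0
    rw [hev.deriv_eq, deriv_const]
  have hu0R : ∀ y : ℝ, R ≤ |y| → u t y = 0 := by
    intro y hy
    exact hR₀ t ⟨ht.le, by linarith⟩ y (by linarith)
  have hUt0R : ∀ y : ℝ, R ≤ |y| → pd1 U (t, y) = 0 :=
    fun y hy => hUt0 t ht (by linarith) y (by linarith)
  have hUx0R : ∀ y : ℝ, R ≤ |y| → pd2 U (t, y) = 0 :=
    fun y hy => hUx0 t ht.le (by linarith) y (by linarith)
  -- Φ
  set Φ : ℝ → ℝ := fun x => phi L ε₁ x * x with hΦdef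
  have hΦeq : Φ = fun x => ε₁ * max (-L) (min L x) := funext fun x => psi_eq L ε₁ hL x
  have hΦc : Continuous Φ := by
    rw [hΦeq]
    exact continuous_const.mul (continuous_const.max (continuous_const.min continuous_id))
  -- continuity facts
  have hcUt : Continuous (pd1 U) := (contDiff_pd1 hU).continuous
  have hcUx : Continuous (pd2 U) := (contDiff_pd2 hU).continuous
  have hcUtt : Continuous (pd1 (pd1 U)) := (contDiff_pd1 (contDiff_pd1 hU)).continuous
  have hcUxt : Continuous (pd1 (pd2 U)) := (contDiff_pd1 (contDiff_pd2 hU)).continuous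
  have hcUtx : Continuous (pd2 (pd1 U)) := (contDiff_pd2 (contDiff_pd1 hU)).continuous
  have hcUxx : Continuous (pd2 (pd2 U)) := (contDiff_pd2 (contDiff_pd2 hU)).continuous
  have hcu : Continuous (fun y => u t y) := by
    have : Continuous (fun y => U (t, y)) := hU.continuous.comp (Continuous.prodMk_right t)
    exact this
  have hcV : Continuous V := hV.continuous
  have hcV' : Continuous (deriv V) := hV.continuous_deriv le_rfl
  -- rewrite everything in pd language
  simp only [eq_ut, eq_ux]
  -- Step 1 : differentiate under the integral sign
  set g' : ℝ × ℝ → ℝ :=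
    fun p => Φ p.2 * (pd1 (pd1 U) p * pd2 U p + pd1 U p * pd1 (pd2 U) p) with hg'def
  have hg'c : Continuous g' :=
    (hΦc.comp continuous_snd).mul
      (((hcUtt.mul hcUx)).add (hcUt.mul hcUxt))
  obtain ⟨C, hC⟩ := IsCompact.exists_bound_of_continuousOn
    ((isCompact_Icc (a := t - 1) (b := t + 1)).prod (isCompact_Icc (a := -R) (b := R)))
    hg'c.continuousOn
  set ε : ℝ := min (t / 2) (1 / 2) with hεdef
  have hε : 0 < ε := lt_min (by linarith) (by norm_num)
  have habs : ∀ x : ℝ, x ∉ Set.Icc (-R) R → R ≤ |x| := by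
    intro x hx
    rcases not_and_or.mp (fun h => hx (Set.mem_Icc.mpr h)) with h | h
    · push_neg at h
      rw [abs_of_neg (by linarith)]
      linarith
    · push_neg at h
      exact le_trans h.le (le_abs_self x)
  have hmain : HasDerivAt (fun τ => ∫ x, Φ x * (pd1 U (τ, x) * pd2 U (τ, x)))
      (∫ x, g' (t, x)) t := by
    refine (hasDerivAt_integral_of_dominated_loc_of_deriv_le (s := Metric.ball t ε)
      (F := fun τ x => Φ x * (pd1 U (τ, x) * pd2 U (τ, x))) (F' := fun τ x => g' (τ, x))
      (bound := Set.indicator (Set.Icc (-R) R) (fun _ => ‖C‖)) (Metric.ball_mem_nhds t hε) ?_ ?_ ?_ ?_ ?_ ?_).2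
    · refine Filter.Eventually.of_forall (fun τ => Continuous.aestronglyMeasurable ?_)
      exact hΦc.mul ((hcUt.comp (Continuous.prodMk_right τ)).mul (hcUx.comp (Continuous.prodMk_right τ)))
    · refine integrable_of_vanish
        (hΦc.mul ((hcUt.comp (Continuous.prodMk_right t)).mul (hcUx.comp (Continuous.prodMk_right t)))) R
        (fun x hx => ?_)
      show Φ x * (pd1 U (t, x) * pd2 U (t, x)) = 0
      rw [hUx0R x hx, mul_zero, mul_zero]
    · exact (hg'c.comp (Continuous.prodMk_right t)).aestronglyMeasurable
    · refine Filter.Eventually.of_forall (fun x => fun τ hτ => ?_)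
      have hτd : |τ - t| < ε := by rw [← Real.dist_eq]; exact Metric.mem_ball.mp hτ
      have h3 : ε ≤ 1/2 := min_le_right _ _
      have h4 : ε ≤ t/2 := min_le_left _ _
      have h5 := abs_lt.mp hτd
      have h1 : 0 < τ := by linarith
      have h2 : τ < t + 1 := by linarith
      by_cases hx : x ∈ Set.Icc (-R) R
      · rw [Set.indicator_of_mem hx]
        refine le_trans (hC (τ, x) ?_) (le_abs_self C)
        refine Set.mem_prod.mpr ⟨Set.mem_Icc.mpr ⟨by linarith, by linarith⟩, hx⟩
      · rw [Set.indicator_of_notMem hx]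
        have hxR := habs x hx
        have e1 : pd1 U (τ, x) = 0 := hUt0 τ h1 h2 x (by linarith)
        have e2 : pd2 U (τ, x) = 0 := hUx0 τ h1.le h2.le x (by linarith)
        simp only [hg'def, e1, e2, mul_zero, zero_mul, add_zero, norm_zero, le_refl]
    · exact (MeasureTheory.integrableOn_const
        (isCompact_Icc.measure_lt_top.ne)).integrable_indicator measurableSet_Icc
    · refine Filter.Eventually.of_forall (fun x => fun τ hτ => ?_)
      exact ((hasDerivAt_par_fst (pd1 U) (contDiff_pd1 hU) τ x).mul
        (hasDerivAt_par_fst (pd2 U) (contDiff_pd2 hU) τ x)).const_mul (Φ x)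
  have hfeq : (fun τ => ∫ x, pd1 U (τ, x) * phi L ε₁ x * x * pd2 U (τ, x))
      = fun τ => ∫ x, Φ x * (pd1 U (τ, x) * pd2 U (τ, x)) := by
    funext τ
    rw [show (fun x => pd1 U (τ, x) * phi L ε₁ x * x * pd2 U (τ, x))
      = fun x => Φ x * (pd1 U (τ, x) * pd2 U (τ, x)) from funext fun x => by
        simp only [hΦdef]; ring]
  rw [hfeq, hmain.deriv]
  -- Step 2 : decompose the integrand of the derivative via the PDE and Schwarz symmetry
  have hg'eq : (fun x => g' (t, x)) = fun x =>
      Φ x * (pd2 U (t, x) * pd2 (pd2 U) (t, x))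
      + Φ x * (pd1 U (t, x) * pd2 (pd1 U) (t, x))
      - Φ x * (V x * u t x * pd2 U (t, x))
      - Φ x * (a x * pd1 U (t, x) * pd2 U (t, x)) := by
    funext x
    simp only [hg'def]
    rw [hPDE x, ← mixed_symm U hU (t, x)]
    ring
  -- integrability of the pieces
  have hint1 : Integrable (fun x => Φ x * (pd2 U (t, x) * pd2 (pd2 U) (t, x))) := by
    refine integrable_of_vanish
      (hΦc.mul ((hcUx.comp (Continuous.prodMk_right t)).mul (hcUxx.comp (Continuous.prodMk_right t)))) R
      (fun x hx => ?_)
    rw [hUx0R x hx, zero_mul, mul_zero]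
  have hint4 : Integrable (fun x => Φ x * (pd1 U (t, x) * pd2 (pd1 U) (t, x))) := by
    refine integrable_of_vanish
      (hΦc.mul ((hcUt.comp (Continuous.prodMk_right t)).mul (hcUtx.comp (Continuous.prodMk_right t)))) R
      (fun x hx => ?_)
    rw [hUt0R x hx, zero_mul, mul_zero]
  have hint2 : Integrable (fun x => Φ x * (V x * u t x * pd2 U (t, x))) := by
    refine integrable_of_vanish
      (hΦc.mul ((hcV.mul hcu).mul (hcUx.comp (Continuous.prodMk_right t)))) R
      (fun x hx => ?_)
    rw [hu0R x hx, mul_zero, zero_mul, mul_zero]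
  have hint3 : Integrable (fun x => Φ x * (a x * pd1 U (t, x) * pd2 U (t, x))) := by
    refine integrable_of_vanish
      (hΦc.mul ((ha_cont.mul (hcUt.comp (Continuous.prodMk_right t))).mul
        (hcUx.comp (Continuous.prodMk_right t)))) R (fun x hx => ?_)
    rw [hUt0R x hx, mul_zero, zero_mul, mul_zero]
  have s1 : ∫ x, (Φ x * (pd2 U (t, x) * pd2 (pd2 U) (t, x))
        + Φ x * (pd1 U (t, x) * pd2 (pd1 U) (t, x)))
      = (∫ x, Φ x * (pd2 U (t, x) * pd2 (pd2 U) (t, x)))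
        + (∫ x, Φ x * (pd1 U (t, x) * pd2 (pd1 U) (t, x))) := integral_add hint1 hint4
  have s2 : ∫ x, (Φ x * (pd2 U (t, x) * pd2 (pd2 U) (t, x))
        + Φ x * (pd1 U (t, x) * pd2 (pd1 U) (t, x)) - Φ x * (V x * u t x * pd2 U (t, x)))
      = (∫ x, (Φ x * (pd2 U (t, x) * pd2 (pd2 U) (t, x))
        + Φ x * (pd1 U (t, x) * pd2 (pd1 U) (t, x))))
        - (∫ x, Φ x * (V x * u t x * pd2 U (t, x))) := integral_sub (hint1.add hint4) hint2
  have s3 : ∫ x, (Φ x * (pd2 U (t, x) * pd2 (pd2 U) (t, x))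
        + Φ x * (pd1 U (t, x) * pd2 (pd1 U) (t, x)) - Φ x * (V x * u t x * pd2 U (t, x))
        - Φ x * (a x * pd1 U (t, x) * pd2 U (t, x)))
      = (∫ x, (Φ x * (pd2 U (t, x) * pd2 (pd2 U) (t, x))
        + Φ x * (pd1 U (t, x) * pd2 (pd1 U) (t, x)) - Φ x * (V x * u t x * pd2 U (t, x))))
        - (∫ x, Φ x * (a x * pd1 U (t, x) * pd2 U (t, x))) :=
    integral_sub ((hint1.add hint4).sub hint2) hint3
  have hsplitint : ∫ x, g' (t, x)
      = (∫ x, Φ x * (pd2 U (t, x) * pd2 (pd2 U) (t, x)))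
      + (∫ x, Φ x * (pd1 U (t, x) * pd2 (pd1 U) (t, x)))
      - (∫ x, Φ x * (V x * u t x * pd2 U (t, x)))
      - (∫ x, Φ x * (a x * pd1 U (t, x) * pd2 U (t, x))) := by
    rw [hg'eq, s3, s2, s1]
  -- Step 3 : the integration by parts identities
  have hI1 : ∫ x, Φ x * (pd2 U (t, x) * pd2 (pd2 U) (t, x))
      = -(ε₁ * ∫ x in (-L)..L, (1/2) * (pd2 U (t, x))^2) := by
    refine integral_psi L ε₁ R hL hLR (fun x => (1/2) * (pd2 U (t, x))^2)
      (fun x => pd2 U (t, x) * pd2 (pd2 U) (t, x)) (fun x => ?_) ?_ (fun x hx => ?_)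
      (fun x hx => ?_)
    · have k := hasDerivAt_par_snd (pd2 U) (contDiff_pd2 hU) t x
      have := (k.fun_pow 2).const_mul (1/2 : ℝ)
      refine this.congr_deriv ?_
      ring
    · exact (hcUx.comp (Continuous.prodMk_right t)).mul (hcUxx.comp (Continuous.prodMk_right t))
    · beta_reduce; rw [hUx0R x hx]; ring
    · beta_reduce; rw [hUx0R x hx]; ring
  have hI4 : ∫ x, Φ x * (pd1 U (t, x) * pd2 (pd1 U) (t, x))
      = -(ε₁ * ∫ x in (-L)..L, (1/2) * (pd1 U (t, x))^2) := by
    refine integral_psi L ε₁ R hL hLR (fun x => (1/2) * (pd1 U (t, x))^2)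
      (fun x => pd1 U (t, x) * pd2 (pd1 U) (t, x)) (fun x => ?_) ?_ (fun x hx => ?_)
      (fun x hx => ?_)
    · have k := hasDerivAt_par_snd (pd1 U) (contDiff_pd1 hU) t x
      have := (k.fun_pow 2).const_mul (1/2 : ℝ)
      refine this.congr_deriv ?_
      ring
    · exact (hcUt.comp (Continuous.prodMk_right t)).mul (hcUtx.comp (Continuous.prodMk_right t))
    · beta_reduce; rw [hUt0R x hx]; ring
    · beta_reduce; rw [hUt0R x hx]; ring
  -- the V-term
  have hDint : Integrable (fun x => Φ x * (deriv V x * (u t x)^2)) := by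
    refine integrable_of_vanish (hΦc.mul (hcV'.mul (hcu.pow 2))) R (fun x hx => ?_)
    beta_reduce
    rw [hu0R x hx]
    ring
  have hI2' : ∫ x, Φ x * ((1/2) * (deriv V x * (u t x)^2) + V x * u t x * pd2 U (t, x))
      = -(ε₁ * ∫ x in (-L)..L, (1/2) * (V x * (u t x)^2)) := by
    refine integral_psi L ε₁ R hL hLR (fun x => (1/2) * (V x * (u t x)^2))
      (fun x => (1/2) * (deriv V x * (u t x)^2) + V x * u t x * pd2 U (t, x))
      (fun x => ?_) ?_ (fun x hx => ?_) (fun x hx => ?_)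
    · have hV' : HasDerivAt V (deriv V x) x :=
        ((hV.differentiable (by norm_num)) x).hasDerivAt
      have hu' : HasDerivAt (fun y => u t y) (pd2 U (t, x)) x := hasDerivAt_par_snd U hU t x
      have := (hV'.mul (hu'.fun_pow 2)).const_mul (1/2 : ℝ)
      refine this.congr_deriv ?_
      ring
    · exact (continuous_const.mul (hcV'.mul (hcu.pow 2))).add
        ((hcV.mul hcu).mul (hcUx.comp (Continuous.prodMk_right t)))
    · beta_reduce; rw [hu0R x hx]; ring
    · beta_reduce; rw [hu0R x hx, hUx0R x hx]; ring
  have hI2 : ∫ x, Φ x * (V x * u t x * pd2 U (t, x))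
      = -(ε₁ * ∫ x in (-L)..L, (1/2) * (V x * (u t x)^2))
        - (1/2) * ∫ x, Φ x * (deriv V x * (u t x)^2) := by
    have e2 : (fun x => Φ x * ((1/2) * (deriv V x * (u t x)^2) + V x * u t x * pd2 U (t, x)))
        = fun x => (1/2) * (Φ x * (deriv V x * (u t x)^2))
          + Φ x * (V x * u t x * pd2 U (t, x)) := by
      funext x; ring
    have e3 := hI2'
    rw [e2, integral_add (hDint.const_mul (1/2)) hint2, integral_const_mul] at e3
    linarith
  -- Step 4 : rewrite the remaining integrals of the statement
  have hT2 : ∫ x, (phi L ε₁ x + phi' L ε₁ x * x) * (pd1 U (t, x)) ^ 2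
      = ε₁ * ∫ x in (-L)..L, (pd1 U (t, x)) ^ 2 := integral_w L ε₁ hL _
  have hT3 : ∫ x, (phi L ε₁ x + phi' L ε₁ x * x) * (pd2 U (t, x)) ^ 2
      = ε₁ * ∫ x in (-L)..L, (pd2 U (t, x)) ^ 2 := integral_w L ε₁ hL _
  have hT4 : ∫ x, (V x * phi L ε₁ x + V x * phi' L ε₁ x * x) * (u t x) ^ 2
      = ε₁ * ∫ x in (-L)..L, V x * (u t x) ^ 2 := by
    rw [show (fun x => (V x * phi L ε₁ x + V x * phi' L ε₁ x * x) * (u t x) ^ 2)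
      = fun x => (phi L ε₁ x + phi' L ε₁ x * x) * (V x * (u t x) ^ 2) from
        funext fun x => by ring]
    exact integral_w L ε₁ hL _
  have hT5 : ∫ x, deriv V x * phi L ε₁ x * x * (u t x) ^ 2
      = ∫ x, Φ x * (deriv V x * (u t x)^2) := by
    rw [show (fun x => deriv V x * phi L ε₁ x * x * (u t x) ^ 2)
      = fun x => Φ x * (deriv V x * (u t x)^2) from funext fun x => by
        simp only [hΦdef]; ring]
  have hT6 : ∫ x, a x * pd1 U (t, x) * phi L ε₁ x * x * pd2 U (t, x)
      = ∫ x, Φ x * (a x * pd1 U (t, x) * pd2 U (t, x)) := by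
    rw [show (fun x => a x * pd1 U (t, x) * phi L ε₁ x * x * pd2 U (t, x))
      = fun x => Φ x * (a x * pd1 U (t, x) * pd2 U (t, x)) from funext fun x => by
        simp only [hΦdef]; ring]
  -- Step 5 : put everything together
  rw [hsplitint, hI1, hI4, hI2, hT2, hT3, hT4, hT5, hT6,
    intervalIntegral.integral_const_mul, intervalIntegral.integral_const_mul,
    intervalIntegral.integral_const_mul]
  ring
end

section
/- Let L > 0, ε₁ > 0, φ(x) = ε₁ for |x| ≤ L and φ(x) = Lε₁/|x| for |x| ≥ L, and let C* > 0 be a constant for which the Poincaré-type inequality ∫_{|x|≤L} w² dx ≤ C*(∫_ℝ (w')² dx + ∫_{|x|≥L} w² dx) holds for all w ∈ H¹(ℝ). Assume V is C¹ with V > 0, V'(x)x ≤ 0, and a is continuous, bounded, nonnegative with a(x) ≥ ε₁ for |x| ≥ L. Then for every w ∈ H¹(ℝ) (in particular for w = u(t,·)): ∫_ℝ (V'(x)x + V(x)) φ(x) w(x)² dx ≤ ε₁ V(0) C* ∫_ℝ w'(x)² dx + (V(0)C* + V_L') ∫_ℝ a(x) w(x)² dx, where V_L' := max{V(L), V(−L)}.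 -/
open MeasureTheory

/-- **Estimate (2.5)–(2.7).** Under (A.1), (A.2), (V.1), (V.2) and a Poincaré-type
constant `C*`, for every `w ∈ H¹(ℝ)`:
`∫ (V'x + V) φ w² dx ≤ ε₁ V(0) C* ∫ (w')² dx + (V(0)C* + V_L') ∫ a w² dx`
with `V_L' := max {V(L), V(−L)}`. -/
theorem potential_term_estimate
    (a V : ℝ → ℝ) (L ε₁ Cstar : ℝ)
    (hL : 0 < L) (hε₁ : 0 < ε₁) (hCstar : 0 < Cstar)
    (ha_cont : Continuous a) (ha_bdd : ∃ M, ∀ x, |a x| ≤ M) (ha_nonneg : ∀ x, 0 ≤ a x)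
    (ha_eff : ∀ x : ℝ, L ≤ |x| → ε₁ ≤ a x)
    (hV : ContDiff ℝ 1 V) (hV_bdd : ∃ M, ∀ x, |V x| ≤ M)
    (hV'_bdd : ∃ M, ∀ x, |deriv V x| ≤ M) (hV_pos : ∀ x, 0 < V x)
    (hV2 : ∀ x, deriv V x * x ≤ 0)
    (hP : ∀ w : ℝ → ℝ, ContDiff ℝ 1 w →
      Integrable (fun x => w x ^ 2) → Integrable (fun x => deriv w x ^ 2) →
      ∫ x in {x : ℝ | |x| ≤ L}, w x ^ 2 ≤
        Cstar * ((∫ x, deriv w x ^ 2) + ∫ x in {x : ℝ | L ≤ |x|}, w x ^ 2))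
    (w : ℝ → ℝ) (hw : ContDiff ℝ 1 w)
    (hw2 : Integrable (fun x => w x ^ 2))
    (hw'2 : Integrable (fun x => deriv w x ^ 2)) :
    ∫ x, (deriv V x * x + V x) * phi L ε₁ x * w x ^ 2 ≤
      ε₁ * V 0 * Cstar * (∫ x, deriv w x ^ 2)
        + (V 0 * Cstar + max (V L) (V (-L))) * ∫ x, a x * w x ^ 2 := by
  obtain ⟨MV, hMV⟩ := hV_bdd
  obtain ⟨MV', hMV'⟩ := hV'_bdd
  obtain ⟨Ma, hMa⟩ := ha_bdd
  set S : Set ℝ := {x : ℝ | |x| ≤ L} with hS_def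
  set VL : ℝ := max (V L) (V (-L)) with hVL_def
  have hS : MeasurableSet S := (isClosed_le continuous_abs continuous_const).measurableSet
  have hT : MeasurableSet {x : ℝ | L ≤ |x|} :=
    (isClosed_le continuous_const continuous_abs).measurableSet
  have hV'cont : Continuous (deriv V) := hV.continuous_deriv le_rfl
  -- monotonicity of V
  have hanti : AntitoneOn V (Set.Ici (0:ℝ)) := by
    apply antitoneOn_of_deriv_nonpos (convex_Ici 0) hV.continuous.continuousOn
      (hV.differentiable one_ne_zero).differentiableOn
    intro x hx
    rw [interior_Ici] at hx
    have := hV2 x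
    nlinarith [Set.mem_Ioi.mp hx]
  have hmono : MonotoneOn V (Set.Iic (0:ℝ)) := by
    apply monotoneOn_of_deriv_nonneg (convex_Iic 0) hV.continuous.continuousOn
      (hV.differentiable one_ne_zero).differentiableOn
    intro x hx
    rw [interior_Iic] at hx
    have := hV2 x
    nlinarith [Set.mem_Iio.mp hx]
  have hV0 : ∀ x, V x ≤ V 0 := by
    intro x
    rcases le_total x 0 with h | h
    · exact hmono (Set.mem_Iic.2 h) (Set.mem_Iic.2 le_rfl) h
    · exact hanti (Set.mem_Ici.2 le_rfl) (Set.mem_Ici.2 h) h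
  have hVLb : ∀ x, L ≤ |x| → V x ≤ VL := by
    intro x hx
    rcases le_total 0 x with h | h
    · rw [abs_of_nonneg h] at hx
      exact (hanti (Set.mem_Ici.2 hL.le) (Set.mem_Ici.2 (hL.le.trans hx)) hx).trans
        (le_max_left _ _)
    · rw [abs_of_nonpos h] at hx
      have hx' : x ≤ -L := by linarith
      exact (hmono (Set.mem_Iic.2 (by linarith : x ≤ 0)) (Set.mem_Iic.2 (by linarith)) hx').trans
        (le_max_right _ _)
  have hVLpos : 0 < VL := lt_max_iff.2 (Or.inl (hV_pos L))
  -- properties of φ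
  have hφ_nonneg : ∀ x, 0 ≤ phi L ε₁ x := by
    intro x
    unfold phi
    split_ifs with h
    · exact hε₁.le
    · push_neg at h
      positivity
  have hφ_le : ∀ x, phi L ε₁ x ≤ ε₁ := by
    intro x
    unfold phi
    split_ifs with h
    · exact le_rfl
    · push_neg at h
      rw [div_le_iff₀ (hL.trans h)]
      nlinarith
  have hφx : ∀ x, |x| * phi L ε₁ x ≤ L * ε₁ := by
    intro x
    unfold phi
    split_ifs with h
    · exact mul_le_mul_of_nonneg_right h hε₁.le
    · push_neg at h
      have hx : (0:ℝ) < |x| := hL.trans h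
      rw [mul_comm, div_mul_cancel₀ _ hx.ne']
  -- measurability of φ
  have hφ_meas : Measurable (phi L ε₁) := by
    unfold phi
    exact Measurable.ite hS measurable_const (measurable_const.div continuous_abs.measurable)
  -- integrability of the LHS integrand
  have hMV'0 : 0 ≤ MV' := le_trans (abs_nonneg _) (hMV' 0)
  have hMV0 : 0 ≤ MV := le_trans (abs_nonneg _) (hMV 0)
  have hcoef_meas : AEStronglyMeasurable (fun x => (deriv V x * x + V x) * phi L ε₁ x)
      (volume : Measure ℝ) :=
    (((hV'cont.measurable.mul measurable_id).add hV.continuous.measurable).mul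
      hφ_meas).aestronglyMeasurable
  have hcoef_bdd : ∀ x, ‖(deriv V x * x + V x) * phi L ε₁ x‖ ≤ MV' * (L * ε₁) + MV * ε₁ := by
    intro x
    rw [Real.norm_eq_abs, abs_mul, abs_of_nonneg (hφ_nonneg x)]
    have h1 : |deriv V x * x + V x| ≤ |deriv V x| * |x| + |V x| := by
      calc |deriv V x * x + V x| ≤ |deriv V x * x| + |V x| := abs_add_le _ _
        _ = |deriv V x| * |x| + |V x| := by rw [abs_mul]
    calc |deriv V x * x + V x| * phi L ε₁ x
        ≤ (|deriv V x| * |x| + |V x|) * phi L ε₁ x :=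
          mul_le_mul_of_nonneg_right h1 (hφ_nonneg x)
      _ = |deriv V x| * (|x| * phi L ε₁ x) + |V x| * phi L ε₁ x := by ring
      _ ≤ MV' * (L * ε₁) + MV * ε₁ :=
          add_le_add
            (mul_le_mul (hMV' x) (hφx x) (mul_nonneg (abs_nonneg _) (hφ_nonneg x)) hMV'0)
            (mul_le_mul (hMV x) (hφ_le x) (hφ_nonneg x) hMV0)
  have hf_int : Integrable (fun x => (deriv V x * x + V x) * phi L ε₁ x * w x ^ 2) := by
    have := hw2.bdd_mul (c := MV' * (L * ε₁) + MV * ε₁) hcoef_meas (Filter.Eventually.of_forall hcoef_bdd)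
    simpa using this
  have haw_int : Integrable (fun x => a x * w x ^ 2) :=
    hw2.bdd_mul ha_cont.aestronglyMeasurable
      (c := Ma) (Filter.Eventually.of_forall fun x => by rw [Real.norm_eq_abs]; exact hMa x)
  have hind_int : Integrable (S.indicator (fun x => w x ^ 2)) := hw2.indicator hS
  -- pointwise bound
  have hpt : ∀ x, (deriv V x * x + V x) * phi L ε₁ x * w x ^ 2 ≤
      ε₁ * V 0 * S.indicator (fun y => w y ^ 2) x + VL * (a x * w x ^ 2) := by
    intro x
    by_cases hx : |x| ≤ L
    · rw [Set.indicator_of_mem (show x ∈ S from hx)]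
      have h1 : phi L ε₁ x = ε₁ := if_pos hx
      rw [h1]
      have hA : deriv V x * x * (ε₁ * w x ^ 2) ≤ 0 :=
        mul_nonpos_of_nonpos_of_nonneg (hV2 x) (by positivity)
      have hB : V x * (ε₁ * w x ^ 2) ≤ V 0 * (ε₁ * w x ^ 2) :=
        mul_le_mul_of_nonneg_right (hV0 x) (by positivity)
      have hC : 0 ≤ VL * (a x * w x ^ 2) :=
        mul_nonneg hVLpos.le (mul_nonneg (ha_nonneg x) (sq_nonneg _))
      nlinarith
    · rw [Set.indicator_of_notMem (show x ∉ S from hx)]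
      push_neg at hx
      have hφa : phi L ε₁ x ≤ a x := (hφ_le x).trans (ha_eff x hx.le)
      have h1 : V x * phi L ε₁ x ≤ VL * a x :=
        mul_le_mul (hVLb x hx.le) hφa (hφ_nonneg x) hVLpos.le
      have hA : deriv V x * x * (phi L ε₁ x * w x ^ 2) ≤ 0 :=
        mul_nonpos_of_nonpos_of_nonneg (hV2 x) (mul_nonneg (hφ_nonneg x) (sq_nonneg _))
      have hB : V x * phi L ε₁ x * w x ^ 2 ≤ VL * a x * w x ^ 2 :=
        mul_le_mul_of_nonneg_right h1 (sq_nonneg _)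
      nlinarith
  -- integrate the pointwise bound
  have step1 : ∫ x, (deriv V x * x + V x) * phi L ε₁ x * w x ^ 2 ≤
      ∫ x, (ε₁ * V 0 * S.indicator (fun y => w y ^ 2) x + VL * (a x * w x ^ 2)) :=
    integral_mono hf_int ((hind_int.const_mul _).add (haw_int.const_mul _)) hpt
  rw [integral_add (hind_int.const_mul _) (haw_int.const_mul _), integral_const_mul,
    integral_const_mul, integral_indicator hS] at step1
  -- Poincaré
  have hPapp := hP w hw hw2 hw'2
  -- on {L ≤ |x|}, ε₁ w² ≤ a w²
  have hTa : ε₁ * ∫ x in {x : ℝ | L ≤ |x|}, w x ^ 2 ≤ ∫ x, a x * w x ^ 2 := by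
    have h1 : ∫ x in {x : ℝ | L ≤ |x|}, ε₁ * w x ^ 2 ≤
        ∫ x in {x : ℝ | L ≤ |x|}, a x * w x ^ 2 := by
      apply setIntegral_mono_on (hw2.const_mul ε₁).integrableOn haw_int.integrableOn hT
      intro x hx
      exact mul_le_mul_of_nonneg_right (ha_eff x hx) (sq_nonneg _)
    have h2 : ∫ x in {x : ℝ | L ≤ |x|}, a x * w x ^ 2 ≤ ∫ x, a x * w x ^ 2 :=
      setIntegral_le_integral haw_int
        (Filter.Eventually.of_forall fun x => mul_nonneg (ha_nonneg x) (sq_nonneg _))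
    rw [integral_const_mul] at h1
    linarith
  -- combine
  have k1 : ε₁ * V 0 * (∫ x in S, w x ^ 2) ≤
      ε₁ * V 0 * (Cstar * ((∫ x, deriv w x ^ 2) + ∫ x in {x : ℝ | L ≤ |x|}, w x ^ 2)) :=
    mul_le_mul_of_nonneg_left hPapp (mul_nonneg hε₁.le (hV_pos 0).le)
  have k2 : V 0 * Cstar * (ε₁ * ∫ x in {x : ℝ | L ≤ |x|}, w x ^ 2) ≤
      V 0 * Cstar * ∫ x, a x * w x ^ 2 :=
    mul_le_mul_of_nonneg_left hTa (mul_nonneg (hV_pos 0).le hCstar.le)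
  nlinarith [step1, k1, k2]
end

section
/- (Lemma 2.4: positivity of the auxiliary functional.) Assume (A.1), (A.2), (V.1), (V.2), set α = ε₁/4 and V_L := min{V(L),V(−L)}. There exists k₀ ≥ 2 (any k with k > α/ε + αε/V_L + Lε₁ for some fixed 0 < ε < ε₁ will do) such that for all k ≥ k₀ and every smooth classical solution u of u_tt − u_xx + V(x)u + a(x)u_t = 0 with smooth compactly supported initial data, the functional G_k(t) = ∫_ℝ u_t(t,x) φ(x) x u_x(t,x) dx + α ∫_ℝ u_t(t,x) u(t,x) dx + (α/2) ∫_ℝ a(x) u(t,x)² dx + k E_u(t) satisfies G_k(t) ≥ 0 for all t ≥ 0. -/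
open MeasureTheory

/-- The auxiliary functional `G_k(t)` (with `α = ε₁/4`). -/
noncomputable def Gk (V a : ℝ → ℝ) (L ε₁ k : ℝ) (u : ℝ → ℝ → ℝ) (t : ℝ) : ℝ :=
  (∫ x, ut u t x * phi L ε₁ x * x * ux u t x)
    + (ε₁ / 4) * (∫ x, ut u t x * u t x)
    + (ε₁ / 4 / 2) * (∫ x, a x * (u t x) ^ 2)
    + k * Eu V u t

open Set Filter

lemma phi_bound (L ε₁ : ℝ) (hL : 0 < L) (hε₁ : 0 < ε₁) (x : ℝ) :
    |phi L ε₁ x * x| ≤ L * ε₁ := by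
  unfold phi
  split_ifs with h
  · rw [abs_mul, abs_of_pos hε₁]
    nlinarith [abs_nonneg x]
  · push_neg at h
    have hx0 : |x| ≠ 0 := (hL.trans h).ne'
    rw [abs_mul, abs_div, abs_abs, abs_of_pos (by positivity : (0:ℝ) < L * ε₁),
      div_mul_cancel₀ _ hx0]

lemma phi_meas (L ε₁ : ℝ) : Measurable (phi L ε₁) := by
  unfold phi
  exact Measurable.ite (measurableSet_le continuous_abs.measurable measurable_const)
    measurable_const (measurable_const.div continuous_abs.measurable)

lemma key_ineq (ε₁ k c ax Vx B p q w : ℝ)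
    (hc : -B ≤ c) (hc' : c ≤ B)
    (hk1 : B + 1/4 ≤ k)
    (hmain : ε₁ * ε₁ / 4 ≤ ε₁ / 4 * ax + k * Vx) :
    0 ≤ p * c * q + ε₁ / 4 * (p * w) + ε₁ / 4 / 2 * (ax * w ^ 2)
      + k * (1/2) * (p ^ 2 + q ^ 2 + Vx * w ^ 2) := by
  nlinarith [mul_nonneg (by linarith : (0:ℝ) ≤ B - c) (sq_nonneg (p - q)),
    mul_nonneg (by linarith : (0:ℝ) ≤ B + c) (sq_nonneg (p + q)),
    sq_nonneg (p + ε₁ * w),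
    mul_nonneg (by linarith : (0:ℝ) ≤ k - B - 1/4) (sq_nonneg p),
    mul_nonneg (by linarith : (0:ℝ) ≤ k - B - 1/4) (sq_nonneg q),
    mul_nonneg (by linarith : (0:ℝ) ≤ ε₁ / 4 * ax + k * Vx - ε₁ * ε₁ / 4) (sq_nonneg w)]

lemma V_lower (V : ℝ → ℝ) (L : ℝ) (hL : 0 < L) (hV : ContDiff ℝ 1 V)
    (hV2 : ∀ x, deriv V x * x ≤ 0) :
    ∀ x, |x| ≤ L → min (V L) (V (-L)) ≤ V x := by
  have hant : AntitoneOn V (Icc 0 L) := by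
    apply antitoneOn_of_deriv_nonpos (convex_Icc 0 L) hV.continuous.continuousOn
      ((hV.differentiable one_ne_zero).differentiableOn.mono interior_subset)
    intro x hx
    rw [interior_Icc] at hx
    nlinarith [hV2 x, hx.1]
  have hmono : MonotoneOn V (Icc (-L) 0) := by
    apply monotoneOn_of_deriv_nonneg (convex_Icc (-L) 0) hV.continuous.continuousOn
      ((hV.differentiable one_ne_zero).differentiableOn.mono interior_subset)
    intro x hx
    rw [interior_Icc] at hx
    nlinarith [hV2 x, hx.2]
  intro x hx
  rcases le_total 0 x with h | h
  · have hxL : x ≤ L := (le_abs_self x).trans hx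
    have := hant ⟨h, hxL⟩ ⟨hL.le, le_rfl⟩ hxL
    exact le_trans (min_le_left _ _) this
  · have hxL : -L ≤ x := by
      have : -x ≤ L := (neg_le_abs x).trans hx
      linarith
    have := hmono ⟨le_rfl, by linarith⟩ ⟨hxL, h⟩ hxL
    exact le_trans (min_le_right _ _) this

lemma deriv_zero_right (f : ℝ → ℝ) (d t T : ℝ) (hT : t < T)
    (hd : HasDerivAt f d t) (h0 : ∀ s ∈ Icc t T, f s = 0) : d = 0 := by
  have h2 : HasDerivWithinAt f 0 (Ici t) t := by
    have hev : f =ᶠ[nhdsWithin t (Ici t)] fun _ => 0 := by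
      filter_upwards [Ico_mem_nhdsGE hT] with s hs
      exact h0 s ⟨hs.1, hs.2.le⟩
    exact (hasDerivWithinAt_const t _ 0).congr_of_eventuallyEq hev (h0 t ⟨le_rfl, hT.le⟩)
  have e1 := hd.hasDerivWithinAt.derivWithin (uniqueDiffOn_Ici t t self_mem_Ici)
  have e2 := h2.derivWithin (uniqueDiffOn_Ici t t self_mem_Ici)
  rw [e1] at e2
  exact e2

/-- **Lemma 2.4 (positivity of `G_k`).** Under (A.1), (A.2), (V.1), (V.2), with
`α = ε₁/4`, there exists `k₀ ≥ 2` such that for all `k ≥ k₀` and every smooth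
classical solution `u` with smooth compactly supported data, `G_k(t) ≥ 0` for all
`t ≥ 0`. -/
theorem lemma_2_4
    (a V : ℝ → ℝ) (L ε₁ : ℝ)
    (hL : 0 < L) (hε₁ : 0 < ε₁)
    (ha_cont : Continuous a) (ha_bdd : ∃ M, ∀ x, |a x| ≤ M) (ha_nonneg : ∀ x, 0 ≤ a x)
    (ha_eff : ∀ x : ℝ, L ≤ |x| → ε₁ ≤ a x)
    (hV : ContDiff ℝ 1 V) (hV_bdd : ∃ M, ∀ x, |V x| ≤ M)
    (hV'_bdd : ∃ M, ∀ x, |deriv V x| ≤ M) (hV_pos : ∀ x, 0 < V x)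
    (hV2 : ∀ x, deriv V x * x ≤ 0) :
    ∃ k₀ : ℝ, 2 ≤ k₀ ∧
      ∀ k ≥ k₀, ∀ (u : ℝ → ℝ → ℝ) (u₀ u₁ : ℝ → ℝ),
        IsSmoothSolution V a u u₀ u₁ →
        ∀ t ≥ (0:ℝ), 0 ≤ Gk V a L ε₁ k u t := by
  set VL := min (V L) (V (-L)) with hVLdef
  have hVL : 0 < VL := lt_min (hV_pos L) (hV_pos (-L))
  refine ⟨max 2 (max (L * ε₁ + 1/4) (ε₁ / 4 * ε₁ / VL)), le_max_left _ _, ?_⟩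
  intro k hk u u₀ u₁ hsol t ht
  obtain ⟨hF, _, _, _, _, _, _, _, hsupp⟩ := hsol
  have hk2 : (2:ℝ) ≤ k := le_trans (le_max_left _ _) hk
  have hk0 : (0:ℝ) ≤ k := by linarith
  have hk1 : L * ε₁ + 1/4 ≤ k := le_trans (le_trans (le_max_left _ _) (le_max_right _ _)) hk
  have hkV : ε₁ / 4 * ε₁ ≤ k * VL := by
    have h := le_trans (le_trans (le_max_right _ _) (le_max_right _ _)) hk
    rwa [div_le_iff₀ hVL] at h
  set F : ℝ × ℝ → ℝ := fun p => u p.1 p.2 with hFdef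
  set g1 : ℝ → ℝ := fun x => fderiv ℝ F (t, x) (1, 0) with hg1def
  set g2 : ℝ → ℝ := fun x => fderiv ℝ F (t, x) (0, 1) with hg2def
  have hd1 : ∀ x, HasDerivAt (fun s => u s x) (g1 x) t := fun x => by
    have := (hF.differentiable (by norm_num) (t, x)).hasFDerivAt.comp_hasDerivAt t
      ((hasDerivAt_id t).prodMk (hasDerivAt_const t x))
    exact this
  have hd2 : ∀ x, HasDerivAt (fun y => u t y) (g2 x) x := fun x =>
    (hF.differentiable (by norm_num) (t, x)).hasFDerivAt.comp_hasDerivAt x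
      ((hasDerivAt_const x t).prodMk (hasDerivAt_id x))
  have hut : ∀ x, ut u t x = g1 x := fun x => (hd1 x).deriv
  have hux : ∀ x, ux u t x = g2 x := fun x => (hd2 x).deriv
  have hfC : Continuous (fderiv ℝ F) := hF.continuous_fderiv (by norm_num)
  have hcont1 : Continuous g1 := (hfC.comp (Continuous.prodMk_right t)).clm_apply continuous_const
  have hcont2 : Continuous g2 := (hfC.comp (Continuous.prodMk_right t)).clm_apply continuous_const
  have hcontw : Continuous (u t) := hF.continuous.comp (Continuous.prodMk_right t)
  obtain ⟨R, hRpos, hR⟩ := hsupp (t + 1) (by linarith)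
  have hw0 : ∀ x, R ≤ |x| → u t x = 0 := fun x hx => hR t ⟨ht, by linarith⟩ x hx
  have hg10 : ∀ x, R ≤ |x| → g1 x = 0 := by
    intro x hx
    exact deriv_zero_right _ _ t (t + 1) (by linarith) (hd1 x)
      (fun s hs => hR s ⟨le_trans ht hs.1, hs.2⟩ x hx)
  have hg20 : ∀ x, R + 1 ≤ |x| → g2 x = 0 := by
    intro x hx
    have hev : (fun y => u t y) =ᶠ[nhds x] fun _ => 0 := by
      filter_upwards [Metric.ball_mem_nhds x one_pos] with y hy
      apply hw0
      have h2 : |x - y| < 1 := by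
        have := Metric.mem_ball.mp hy
        rw [Real.dist_eq] at this
        rw [abs_sub_comm]; exact this
      have h1 : |x| - |y| ≤ |x - y| := abs_sub_abs_le_abs_sub x y
      linarith
    have h0 : deriv (fun y => u t y) x = 0 := by
      rw [hev.deriv_eq]; exact deriv_const x 0
    exact ((hd2 x).deriv).symm.trans h0
  set S := R + 1 with hSdef
  have hcsupp : ∀ f : ℝ → ℝ, (∀ x, S ≤ |x| → f x = 0) → HasCompactSupport f := by
    intro f hf
    apply HasCompactSupport.intro (isCompact_Icc (a := -S) (b := S))
    intro x hx
    apply hf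
    simp only [Set.mem_Icc, not_and_or, not_le] at hx
    rcases hx with h | h
    · rw [abs_of_neg (by linarith : x < 0)]; linarith
    · rw [abs_of_pos (by linarith : 0 < x)]; linarith
  have hint : ∀ f : ℝ → ℝ, Continuous f → (∀ x, S ≤ |x| → f x = 0) → Integrable f :=
    fun f hc h0 => hc.integrable_of_hasCompactSupport (hcsupp f h0)
  have i2 : Integrable (fun x => g1 x * u t x) :=
    hint _ (hcont1.mul hcontw) (fun x hx => by rw [hg10 x (by linarith)]; ring)
  have i3 : Integrable (fun x => a x * u t x ^ 2) :=
    hint _ (ha_cont.mul (hcontw.pow 2)) (fun x hx => by rw [hw0 x (by linarith)]; ring)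
  have i4 : Integrable (fun x => g1 x ^ 2) :=
    hint _ (hcont1.pow 2) (fun x hx => by rw [hg10 x (by linarith)]; ring)
  have i5 : Integrable (fun x => g2 x ^ 2) :=
    hint _ (hcont2.pow 2) (fun x hx => by rw [hg20 x (by linarith)]; ring)
  have i6 : Integrable (fun x => V x * u t x ^ 2) :=
    hint _ (hV.continuous.mul (hcontw.pow 2)) (fun x hx => by rw [hw0 x (by linarith)]; ring)
  have i1 : Integrable (fun x => g1 x * phi L ε₁ x * x * g2 x) := by
    have hmeas : AEStronglyMeasurable (fun x => g1 x * phi L ε₁ x * x * g2 x) volume :=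
      (((hcont1.measurable.mul (phi_meas L ε₁)).mul measurable_id).mul
        hcont2.measurable).aestronglyMeasurable
    have hmaj : Integrable (fun x => L * ε₁ * (|g1 x| * |g2 x|)) :=
      (hint (fun x => |g1 x| * |g2 x|) (hcont1.abs.mul hcont2.abs)
        (fun x hx => by simp [hg10 x (by linarith)])).const_mul _
    apply hmaj.mono' hmeas
    filter_upwards with x
    have hb := phi_bound L ε₁ hL hε₁ x
    calc ‖g1 x * phi L ε₁ x * x * g2 x‖
        = |phi L ε₁ x * x| * (|g1 x| * |g2 x|) := by
          rw [Real.norm_eq_abs, abs_mul, abs_mul, abs_mul, abs_mul]; ring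
      _ ≤ L * ε₁ * (|g1 x| * |g2 x|) :=
          mul_le_mul_of_nonneg_right hb (by positivity)
  set H : ℝ → ℝ := fun x => g1 x * phi L ε₁ x * x * g2 x
      + (ε₁ / 4 * (g1 x * u t x)
      + (ε₁ / 4 / 2 * (a x * u t x ^ 2)
      + k * (1/2) * (g1 x ^ 2 + g2 x ^ 2 + V x * u t x ^ 2))) with hHdef
  have hHpos : ∀ x, 0 ≤ H x := by
    intro x
    have hb := abs_le.mp (phi_bound L ε₁ hL hε₁ x)
    have hmain : ε₁ * ε₁ / 4 ≤ ε₁ / 4 * a x + k * V x := by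
      rcases le_or_gt L |x| with h | h
      · have h1 := ha_eff x h
        nlinarith [mul_nonneg hk0 (hV_pos x).le]
      · have h1 := V_lower V L hL hV hV2 x h.le
        rw [← hVLdef] at h1
        have h2 : k * VL ≤ k * V x := mul_le_mul_of_nonneg_left h1 hk0
        nlinarith [ha_nonneg x]
    have hKI := key_ineq ε₁ k (phi L ε₁ x * x) (a x) (V x) (L * ε₁) (g1 x) (g2 x) (u t x)
      hb.1 hb.2 hk1 hmain
    have he : H x = g1 x * (phi L ε₁ x * x) * g2 x + ε₁ / 4 * (g1 x * u t x)
        + ε₁ / 4 / 2 * (a x * u t x ^ 2)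
        + k * (1/2) * (g1 x ^ 2 + g2 x ^ 2 + V x * u t x ^ 2) := by
      rw [hHdef]; ring
    rw [he]
    exact hKI
  have hGk : Gk V a L ε₁ k u t = ∫ x, H x := by
    have hsplit : ∫ x, H x = (∫ x, g1 x * phi L ε₁ x * x * g2 x)
        + (ε₁ / 4 * (∫ x, g1 x * u t x)
        + (ε₁ / 4 / 2 * (∫ x, a x * u t x ^ 2)
        + k * (1/2) * ((∫ x, g1 x ^ 2) + (∫ x, g2 x ^ 2) + ∫ x, V x * u t x ^ 2))) := by
      have iC : Integrable (fun x => g1 x ^ 2 + g2 x ^ 2 + V x * u t x ^ 2) :=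
        (i4.add i5).add i6
      have iB2 : Integrable (fun x => k * (1/2) * (g1 x ^ 2 + g2 x ^ 2 + V x * u t x ^ 2)) :=
        iC.const_mul _
      have iB1 : Integrable (fun x => ε₁ / 4 / 2 * (a x * u t x ^ 2)
          + k * (1/2) * (g1 x ^ 2 + g2 x ^ 2 + V x * u t x ^ 2)) :=
        (i3.const_mul _).add iB2
      have iB : Integrable (fun x => ε₁ / 4 * (g1 x * u t x)
          + (ε₁ / 4 / 2 * (a x * u t x ^ 2)
          + k * (1/2) * (g1 x ^ 2 + g2 x ^ 2 + V x * u t x ^ 2))) :=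
        (i2.const_mul _).add iB1
      simp only [hHdef]
      have e456 : (∫ x, (g1 x ^ 2 + g2 x ^ 2 + V x * u t x ^ 2))
          = (∫ x, g1 x ^ 2) + (∫ x, g2 x ^ 2) + (∫ x, V x * u t x ^ 2) :=
        (integral_add (i4.add i5) i6).trans (by simp only [Pi.add_apply]; rw [integral_add i4 i5])
      rw [integral_add i1 iB, integral_add (i2.const_mul _) iB1,
        integral_add (i3.const_mul _) iB2,
        integral_const_mul, integral_const_mul, integral_const_mul, e456]
    unfold Gk Eu
    simp only [hut, hux]
    rw [hsplit]
    ring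
  rw [hGk]
  exact integral_nonneg hHpos
end

section
/- (Lemma 2.5.) Assume (A.1) and (V.1). Let u be a smooth classical solution of u_tt − u_xx + V(x)u + a(x)u_t = 0 with smooth compactly supported initial data (u₀, u₁), vanishing for |x| ≥ R on each time interval [0,T]. Then for every t ≥ 0: (1/2)‖u(t,·)‖²_{L²} + ∫₀ᵗ ∫_ℝ a(x) u(s,x)² dx ds ≤ (1/2)‖u₀‖²_{L²} + ∫_ℝ (u₁(x) + a(x)u₀(x))² / V(x) dx. In particular, ‖u(t,·)‖²_{L²} + ∫₀ᵗ ∫_ℝ a(x)|u(s,x)|² dx ds ≤ C ( ‖u₀‖²_{L²} + ∫_ℝ |u₁(x) + a(x)u₀(x)|² / V(x) dx ) with C = 2. -/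
open MeasureTheory

private lemma hasDerivAt_comp_fst' {f : ℝ × ℝ → ℝ} (hf : ContDiff ℝ (⊤ : ℕ∞) f) (t x : ℝ) :
    HasDerivAt (fun s => f (s, x)) (fderiv ℝ f (t, x) (1, 0)) t :=
  ((hf.differentiable (by simp) (t, x)).hasFDerivAt).comp_hasDerivAt t
    ((hasDerivAt_id t).prodMk (hasDerivAt_const t x))

private lemma hasDerivAt_comp_snd' {f : ℝ × ℝ → ℝ} (hf : ContDiff ℝ (⊤ : ℕ∞) f) (t x : ℝ) :
    HasDerivAt (fun y => f (t, y)) (fderiv ℝ f (t, x) (0, 1)) x :=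
  ((hf.differentiable (by simp) (t, x)).hasFDerivAt).comp_hasDerivAt x
    ((hasDerivAt_const x t).prodMk (hasDerivAt_id x))

private lemma contDiff_fderiv_apply' {f : ℝ × ℝ → ℝ} (hf : ContDiff ℝ (⊤ : ℕ∞) f) (v : ℝ × ℝ) :
    ContDiff ℝ (⊤ : ℕ∞) (fun p => fderiv ℝ f p v) :=
  (ContinuousLinearMap.apply ℝ ℝ v).contDiff.comp (hf.fderiv_right (by simp))

private lemma myswap {G : ℝ → ℝ → ℝ} {t₀ R' : ℝ} (ht₀ : 0 ≤ t₀)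
    (hG : Continuous (fun p : ℝ × ℝ => G p.1 p.2))
    (hsupp : ∀ s ∈ Set.Icc (0:ℝ) t₀, ∀ x, x ∉ Set.Icc (-R') R' → G s x = 0) :
    (∫ s in (0:ℝ)..t₀, ∫ x, G s x) = ∫ x, ∫ s in (0:ℝ)..t₀, G s x := by
  have hmeas : MeasurableSet (Set.Ioc (0:ℝ) t₀) := measurableSet_Ioc
  have hIoc : Set.Ioc (0:ℝ) t₀ ⊆ Set.Icc 0 t₀ := Set.Ioc_subset_Icc_self
  simp only [intervalIntegral.integral_of_le ht₀]
  have hint : Integrable (fun p : ℝ × ℝ => G p.1 p.2)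
      ((volume.restrict (Set.Ioc 0 t₀)).prod (volume.restrict (Set.Icc (-R') R'))) := by
    rw [Measure.prod_restrict]
    have h1 : IntegrableOn (fun p : ℝ × ℝ => G p.1 p.2) (Set.Icc 0 t₀ ×ˢ Set.Icc (-R') R') :=
      hG.continuousOn.integrableOn_compact (isCompact_Icc.prod isCompact_Icc)
    exact h1.mono_set (Set.prod_mono hIoc subset_rfl)
  calc (∫ s in Set.Ioc 0 t₀, ∫ x, G s x)
      = ∫ s in Set.Ioc 0 t₀, ∫ x in Set.Icc (-R') R', G s x := by
        refine setIntegral_congr_fun hmeas fun s hs => ?_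
        exact (setIntegral_eq_integral_of_forall_compl_eq_zero
          (fun x hx => hsupp s (hIoc hs) x hx)).symm
    _ = ∫ x in Set.Icc (-R') R', ∫ s in Set.Ioc 0 t₀, G s x :=
        integral_integral_swap hint
    _ = ∫ x, ∫ s in Set.Ioc 0 t₀, G s x := by
        refine setIntegral_eq_integral_of_forall_compl_eq_zero fun x hx => ?_
        exact setIntegral_eq_zero_of_forall_eq_zero fun s hs => hsupp s (hIoc hs) x hx

private lemma my_ibp {f g f' g' : ℝ → ℝ} (hf : ∀ x, HasDerivAt f (f' x) x)
    (hg : ∀ x, HasDerivAt g (g' x) x)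
    (h1 : Integrable (fun x => f x * g' x)) (h2 : Integrable (fun x => f' x * g x))
    (h3 : Integrable (fun x => f x * g x)) :
    (∫ x, f x * g' x) = -∫ x, f' x * g x :=
  integral_mul_deriv_eq_deriv_mul_of_integrable (fun x _ => hf x) (fun x _ => hg x) h1 h2 h3

/-- primitive in the first (time) variable -/
private noncomputable def yF (g : ℝ → ℝ → ℝ) (s x : ℝ) : ℝ := ∫ σ in (0:ℝ)..s, g σ x

private lemma yF_cont {g : ℝ → ℝ → ℝ} (hg : Continuous (fun p : ℝ × ℝ => g p.1 p.2)) :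
    Continuous (fun p : ℝ × ℝ => yF g p.1 p.2) := by
  have := intervalIntegral.continuous_parametric_intervalIntegral_of_continuous
    (μ := volume) (a₀ := (0:ℝ)) (f := fun (p : ℝ × ℝ) σ => g σ p.2)
    (s := fun p : ℝ × ℝ => p.1)
    (by exact hg.comp (continuous_snd.prodMk (continuous_snd.comp continuous_fst)))
    continuous_fst
  exact this

private lemma yF_hasDeriv {g : ℝ → ℝ → ℝ} (hg : Continuous (fun p : ℝ × ℝ => g p.1 p.2))
    (s x : ℝ) : HasDerivAt (fun τ => yF g τ x) (g s x) s := by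
  have hc : Continuous fun σ => g σ x := hg.comp (continuous_id.prodMk continuous_const)
  exact intervalIntegral.integral_hasDerivAt_right (hc.intervalIntegrable _ _)
    (hc.stronglyMeasurableAtFilter _ _) hc.continuousAt

private lemma yF_zero {g : ℝ → ℝ → ℝ} {s x : ℝ}
    (h : ∀ σ ∈ Set.uIcc (0:ℝ) s, g σ x = 0) : yF g s x = 0 := by
  rw [yF, intervalIntegral.integral_congr (g := fun _ => (0:ℝ)) h,
    intervalIntegral.integral_zero]

/-- **Lemma 2.5.** Under (A.1) and (V.1), every smooth classical solution `u` of
`u_tt − u_xx + V u + a u_t = 0` with smooth compactly supported data `(u₀, u₁)`,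
vanishing for large `|x|` on each `[0,T]`, satisfies for every `t ≥ 0`:
`(1/2)‖u(t,·)‖² + ∫₀ᵗ ∫ a u² dx ds ≤ (1/2)‖u₀‖² + ∫ (u₁ + a u₀)²/V dx`, and in
particular `‖u(t,·)‖² + ∫₀ᵗ ∫ a u² dx ds ≤ 2 (‖u₀‖² + ∫ (u₁ + a u₀)²/V dx)`. -/
theorem lemma_2_5
    (a V : ℝ → ℝ) (u : ℝ → ℝ → ℝ) (u₀ u₁ : ℝ → ℝ)
    (ha_cont : Continuous a) (ha_bdd : ∃ M, ∀ x, |a x| ≤ M) (ha_nonneg : ∀ x, 0 ≤ a x)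
    (hV : ContDiff ℝ 1 V) (hV_bdd : ∃ M, ∀ x, |V x| ≤ M)
    (hV'_bdd : ∃ M, ∀ x, |deriv V x| ≤ M) (hV_pos : ∀ x, 0 < V x)
    (hsol : IsSmoothSolution V a u u₀ u₁) :
    ∀ t ≥ (0:ℝ),
      (1/2) * (∫ x, (u t x) ^ 2)
          + (∫ s in Set.Icc (0:ℝ) t, ∫ x, a x * (u s x) ^ 2) ≤
        (1/2) * (∫ x, u₀ x ^ 2) + (∫ x, (u₁ x + a x * u₀ x) ^ 2 / V x) ∧
      (∫ x, (u t x) ^ 2)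
          + (∫ s in Set.Icc (0:ℝ) t, ∫ x, a x * (u s x) ^ 2) ≤
        2 * ((∫ x, u₀ x ^ 2) + ∫ x, (u₁ x + a x * u₀ x) ^ 2 / V x) := by
  obtain ⟨hU, hPDE, hu0, hu1, hu₀s, hu₀c, hu₁s, hu₁c, hsupp⟩ := hsol
  -- derivative representations
  have hut : ∀ t x, HasDerivAt (fun s => u s x) (ut u t x) t := by
    intro t x
    have h := hasDerivAt_comp_fst' hU t x
    have he : ut u t x = fderiv ℝ (fun p : ℝ × ℝ => u p.1 p.2) (t, x) (1, 0) := h.deriv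
    rw [he]; exact h
  have hux : ∀ t x, HasDerivAt (fun y => u t y) (ux u t x) x := by
    intro t x
    have h := hasDerivAt_comp_snd' hU t x
    have he : ux u t x = fderiv ℝ (fun p : ℝ × ℝ => u p.1 p.2) (t, x) (0, 1) := h.deriv
    rw [he]; exact h
  have hF1 : ContDiff ℝ (⊤ : ℕ∞) (fun p : ℝ × ℝ => fderiv ℝ (fun q : ℝ × ℝ => u q.1 q.2) p (1, 0)) :=
    contDiff_fderiv_apply' hU _
  have hF2 : ContDiff ℝ (⊤ : ℕ∞) (fun p : ℝ × ℝ => fderiv ℝ (fun q : ℝ × ℝ => u q.1 q.2) p (0, 1)) :=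
    contDiff_fderiv_apply' hU _
  have hut_eq : ∀ t x, ut u t x = fderiv ℝ (fun q : ℝ × ℝ => u q.1 q.2) (t, x) (1, 0) :=
    fun t x => (hasDerivAt_comp_fst' hU t x).deriv
  have hux_eq : ∀ t x, ux u t x = fderiv ℝ (fun q : ℝ × ℝ => u q.1 q.2) (t, x) (0, 1) :=
    fun t x => (hasDerivAt_comp_snd' hU t x).deriv
  have hutfun : ∀ x, (fun s => ut u s x)
      = fun s => fderiv ℝ (fun q : ℝ × ℝ => u q.1 q.2) (s, x) (1, 0) :=
    fun x => funext fun s => hut_eq s x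
  have huxfun : ∀ t, (fun y => ux u t y)
      = fun y => fderiv ℝ (fun q : ℝ × ℝ => u q.1 q.2) (t, y) (0, 1) :=
    fun t => funext fun y => hux_eq t y
  have hutt : ∀ t x, HasDerivAt (fun s => ut u s x) (utt u t x) t := by
    intro t x
    have h := hasDerivAt_comp_fst' hF1 t x
    have he : utt u t x = fderiv ℝ
        (fun p : ℝ × ℝ => fderiv ℝ (fun q : ℝ × ℝ => u q.1 q.2) p (1, 0)) (t, x) (1, 0) := by
      show deriv (fun s => ut u s x) t = _
      rw [hutfun x]; exact h.deriv
    rw [he, hutfun x]; exact h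
  have huxx : ∀ t x, HasDerivAt (fun y => ux u t y) (uxx u t x) x := by
    intro t x
    have h := hasDerivAt_comp_snd' hF2 t x
    have he : uxx u t x = fderiv ℝ
        (fun p : ℝ × ℝ => fderiv ℝ (fun q : ℝ × ℝ => u q.1 q.2) p (0, 1)) (t, x) (0, 1) := by
      show deriv (fun y => ux u t y) x = _
      rw [huxfun t]; exact h.deriv
    rw [he, huxfun t]; exact h
  -- joint continuity
  have cu : Continuous (fun p : ℝ × ℝ => u p.1 p.2) := hU.continuous
  have cut : Continuous (fun p : ℝ × ℝ => ut u p.1 p.2) := by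
    have : (fun p : ℝ × ℝ => ut u p.1 p.2)
        = fun p : ℝ × ℝ => fderiv ℝ (fun q : ℝ × ℝ => u q.1 q.2) (p.1, p.2) (1, 0) :=
      funext fun p => hut_eq p.1 p.2
    rw [this]
    exact hF1.continuous.comp (continuous_fst.prodMk continuous_snd)
  have cux : Continuous (fun p : ℝ × ℝ => ux u p.1 p.2) := by
    have : (fun p : ℝ × ℝ => ux u p.1 p.2)
        = fun p : ℝ × ℝ => fderiv ℝ (fun q : ℝ × ℝ => u q.1 q.2) (p.1, p.2) (0, 1) :=
      funext fun p => hux_eq p.1 p.2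
    rw [this]
    exact hF2.continuous.comp (continuous_fst.prodMk continuous_snd)
  have cutt : Continuous (fun p : ℝ × ℝ => utt u p.1 p.2) := by
    have : (fun p : ℝ × ℝ => utt u p.1 p.2) = fun p : ℝ × ℝ => fderiv ℝ
        (fun q : ℝ × ℝ => fderiv ℝ (fun q : ℝ × ℝ => u q.1 q.2) q (1, 0)) (p.1, p.2) (1, 0) := by
      funext p
      exact (hutt p.1 p.2).deriv ▸ by
        show utt u p.1 p.2 = _
        show deriv (fun s => ut u s p.2) p.1 = _
        rw [hutfun p.2]
        exact (hasDerivAt_comp_fst' hF1 p.1 p.2).deriv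
    rw [this]
    exact (contDiff_fderiv_apply' hF1 _).continuous.comp (continuous_fst.prodMk continuous_snd)
  have cuxx : Continuous (fun p : ℝ × ℝ => uxx u p.1 p.2) := by
    have : (fun p : ℝ × ℝ => uxx u p.1 p.2) = fun p : ℝ × ℝ => fderiv ℝ
        (fun q : ℝ × ℝ => fderiv ℝ (fun q : ℝ × ℝ => u q.1 q.2) q (0, 1)) (p.1, p.2) (0, 1) := by
      funext p
      show deriv (fun y => ux u p.1 y) p.2 = _
      rw [huxfun p.1]
      exact (hasDerivAt_comp_snd' hF2 p.1 p.2).deriv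
    rw [this]
    exact (contDiff_fderiv_apply' hF2 _).continuous.comp (continuous_fst.prodMk continuous_snd)
  -- slicing helpers
  have sl1 : ∀ (g : ℝ → ℝ → ℝ), Continuous (fun p : ℝ × ℝ => g p.1 p.2) →
      ∀ x, Continuous (fun s => g s x) :=
    fun g hg x => hg.comp (continuous_id.prodMk continuous_const)
  have sl2 : ∀ (g : ℝ → ℝ → ℝ), Continuous (fun p : ℝ × ℝ => g p.1 p.2) →
      ∀ s, Continuous (fun x => g s x) :=
    fun g hg s => hg.comp (continuous_const.prodMk continuous_id)
  -- the PDE holds for t ≥ 0 by continuity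
  have hPDE' : ∀ t, 0 ≤ t → ∀ x,
      utt u t x - uxx u t x + V x * u t x + a x * ut u t x = 0 := by
    intro t ht x
    rcases eq_or_lt_of_le ht with h | h
    · subst h
      have hc : Continuous (fun s => utt u s x - uxx u s x + V x * u s x + a x * ut u s x) :=
        (((sl1 _ cutt x).sub (sl1 _ cuxx x)).add (continuous_const.mul (sl1 _ cu x))).add
          (continuous_const.mul (sl1 _ cut x))
      have h1 : Filter.Tendsto (fun s => utt u s x - uxx u s x + V x * u s x + a x * ut u s x)
          (nhdsWithin 0 (Set.Ioi 0))
          (nhds (utt u 0 x - uxx u 0 x + V x * u 0 x + a x * ut u 0 x)) :=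
        (hc.tendsto 0).mono_left nhdsWithin_le_nhds
      have h2 : Filter.Tendsto (fun s => utt u s x - uxx u s x + V x * u s x + a x * ut u s x)
          (nhdsWithin 0 (Set.Ioi 0)) (nhds 0) := by
        apply Filter.Tendsto.congr' _ tendsto_const_nhds
        filter_upwards [self_mem_nhdsWithin] with s hs
        exact (hPDE s hs x).symm
      exact tendsto_nhds_unique h1 h2
    · exact hPDE t h x
  intro t₀ ht₀
  have hDnn : 0 ≤ ∫ x, (u₁ x + a x * u₀ x) ^ 2 / V x :=
    integral_nonneg fun x => div_nonneg (sq_nonneg _) (hV_pos x).le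
  have hNnn : 0 ≤ ∫ x, u₀ x ^ 2 := integral_nonneg fun x => sq_nonneg _
  rcases eq_or_lt_of_le ht₀ with h0 | ht₀pos
  · -- t₀ = 0
    subst h0
    have hIcc0 : (∫ s in Set.Icc (0:ℝ) 0, ∫ x, a x * u s x ^ 2) = 0 := by
      rw [MeasureTheory.integral_Icc_eq_integral_Ioc]
      simp [Set.Ioc_self]
    have hu00 : (∫ x, u 0 x ^ 2) = ∫ x, u₀ x ^ 2 := by simp only [hu0]
    rw [hIcc0, hu00]
    constructor <;> linarith
  -- t₀ > 0
  obtain ⟨R, hR, hRsupp⟩ := hsupp t₀ ht₀pos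
  obtain ⟨r₀, hr₀⟩ := hu₀c.isBounded.subset_closedBall 0
  obtain ⟨r₁, hr₁⟩ := hu₁c.isBounded.subset_closedBall 0
  set B : ℝ := max R (max r₀ r₁) with hBdef
  have hRB : R ≤ B := le_max_left _ _
  have hr₀B : r₀ ≤ B := le_trans (le_max_left _ _) (le_max_right _ _)
  have hr₁B : r₁ ≤ B := le_trans (le_max_right _ _) (le_max_right _ _)
  have hnotJ : ∀ x, x ∉ Set.Icc (-(B+1)) (B+1) → B < |x| := by
    intro x hx
    simp only [Set.mem_Icc, not_and_or, not_le] at hx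
    rcases hx with h | h
    · have := neg_le_abs x; linarith
    · have := le_abs_self x; linarith
  have hu_sp : ∀ s ∈ Set.Icc (0:ℝ) t₀, ∀ x, B < |x| → u s x = 0 := fun s hs x hx =>
    hRsupp s hs x (le_trans hRB hx.le)
  have hOopen : IsOpen {x : ℝ | B < |x|} := isOpen_lt continuous_const continuous_abs
  have hux_sp : ∀ s ∈ Set.Icc (0:ℝ) t₀, ∀ x, B < |x| → ux u s x = 0 := by
    intro s hs x hx
    have hev : (fun y => u s y) =ᶠ[nhds x] (fun _ => (0:ℝ)) := by
      filter_upwards [hOopen.mem_nhds hx] with y hy using hu_sp s hs y hy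
    show deriv (fun y => u s y) x = 0
    rw [hev.deriv_eq]; exact deriv_const x 0
  have huxx_sp : ∀ s ∈ Set.Icc (0:ℝ) t₀, ∀ x, B < |x| → uxx u s x = 0 := by
    intro s hs x hx
    have hev : (fun y => ux u s y) =ᶠ[nhds x] (fun _ => (0:ℝ)) := by
      filter_upwards [hOopen.mem_nhds hx] with y hy using hux_sp s hs y hy
    show deriv (fun y => ux u s y) x = 0
    rw [hev.deriv_eq]; exact deriv_const x 0
  have hu₀_sp : ∀ x, B < |x| → u₀ x = 0 := by
    intro x hx
    apply image_eq_zero_of_notMem_tsupport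
    intro hmem
    have h1 := hr₀ hmem
    rw [Metric.mem_closedBall, Real.dist_eq, sub_zero] at h1
    linarith
  have hu₁_sp : ∀ x, B < |x| → u₁ x = 0 := by
    intro x hx
    apply image_eq_zero_of_notMem_tsupport
    intro hmem
    have h1 := hr₁ hmem
    rw [Metric.mem_closedBall, Real.dist_eq, sub_zero] at h1
    linarith
  have intJ : ∀ f : ℝ → ℝ, Continuous f → (∀ x, B < |x| → f x = 0) → Integrable f := by
    intro f hf h0
    exact hf.integrable_of_hasCompactSupport
      (HasCompactSupport.intro isCompact_Icc (fun x hx => h0 x (hnotJ x hx)))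
  -- the integrated equation
  have hstar : ∀ s, 0 ≤ s → ∀ x, ut u s x
      = (u₁ x + a x * u₀ x) + yF (uxx u) s x - V x * yF u s x - a x * u s x := by
    intro s hs x
    have hsI : Set.uIcc (0:ℝ) s = Set.Icc 0 s := Set.uIcc_of_le hs
    have c1 : Continuous fun σ => utt u σ x := sl1 _ cutt x
    have c2 : Continuous fun σ => uxx u σ x := sl1 _ cuxx x
    have c3 : Continuous fun σ => u σ x := sl1 _ cu x
    have c4 : Continuous fun σ => ut u σ x := sl1 _ cut x
    have i1 : (∫ σ in (0:ℝ)..s, utt u σ x) = ut u s x - u₁ x := by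
      rw [intervalIntegral.integral_eq_sub_of_hasDerivAt (fun σ _ => hutt σ x)
        (c1.intervalIntegrable _ _), hu1 x]
    have i3 : (∫ σ in (0:ℝ)..s, a x * ut u σ x) = a x * u s x - a x * u₀ x := by
      rw [intervalIntegral.integral_eq_sub_of_hasDerivAt (f := fun σ => a x * u σ x)
        (fun σ _ => (hut σ x).const_mul (a x)) ((continuous_const.mul c4).intervalIntegrable _ _), hu0 x]
    have i2 : (∫ σ in (0:ℝ)..s, V x * u σ x) = V x * yF u s x :=
      intervalIntegral.integral_const_mul _ _
    have isum : (∫ σ in (0:ℝ)..s,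
        (utt u σ x - uxx u σ x + V x * u σ x + a x * ut u σ x)) = 0 := by
      rw [intervalIntegral.integral_congr (g := fun _ => (0:ℝ))
        (fun σ hσ => hPDE' σ (by rw [hsI] at hσ; exact hσ.1) x)]
      simp
    have isplit : (∫ σ in (0:ℝ)..s,
        (utt u σ x - uxx u σ x + V x * u σ x + a x * ut u σ x))
        = (((∫ σ in (0:ℝ)..s, utt u σ x) - ∫ σ in (0:ℝ)..s, uxx u σ x)
            + ∫ σ in (0:ℝ)..s, V x * u σ x) + ∫ σ in (0:ℝ)..s, a x * ut u σ x := by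
      rw [intervalIntegral.integral_add (((c1.intervalIntegrable _ _).sub
          (c2.intervalIntegrable _ _)).add ((show Continuous fun σ => V x * u σ x from continuous_const.mul c3).intervalIntegrable _ _))
          ((show Continuous fun σ => a x * ut u σ x from continuous_const.mul c4).intervalIntegrable _ _),
        intervalIntegral.integral_add ((c1.intervalIntegrable _ _).sub
          (c2.intervalIntegrable _ _)) ((show Continuous fun σ => V x * u σ x from continuous_const.mul c3).intervalIntegrable _ _),
        intervalIntegral.integral_sub (c1.intervalIntegrable _ _) (c2.intervalIntegrable _ _)]
    rw [isplit, i1, i2, i3] at isum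
    have hZ : (∫ σ in (0:ℝ)..s, uxx u σ x) = yF (uxx u) s x := rfl
    rw [hZ] at isum
    linarith
  -- continuity of the primitives
  have cy : Continuous (fun p : ℝ × ℝ => yF u p.1 p.2) := yF_cont cu
  have cz : Continuous (fun p : ℝ × ℝ => yF (ux u) p.1 p.2) := yF_cont cux
  have cZ2 : Continuous (fun p : ℝ × ℝ => yF (uxx u) p.1 p.2) := yF_cont cuxx
  -- key identity : the spatial integral of G s vanishes
  have hD : ∀ s, s ∈ Set.Icc (0:ℝ) t₀ →
      (∫ x, (u s x * ut u s x + yF (ux u) s x * ux u s x + V x * (yF u s x * u s x)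
        - (u₁ x + a x * u₀ x) * u s x + a x * u s x ^ 2)) = 0 := by
    intro s hs
    obtain ⟨hs0, hst⟩ := hs
    have hsmem : s ∈ Set.Icc (0:ℝ) t₀ := ⟨hs0, hst⟩
    have hsub : Set.uIcc (0:ℝ) s ⊆ Set.Icc 0 t₀ := by
      rw [Set.uIcc_of_le hs0]; exact Set.Icc_subset_Icc le_rfl hst
    have cus : Continuous fun x => u s x := sl2 _ cu s
    have cuxs : Continuous fun x => ux u s x := sl2 _ cux s
    have cZ2s : Continuous fun x => yF (uxx u) s x := sl2 _ cZ2 s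
    have czs : Continuous fun x => yF (ux u) s x := sl2 _ cz s
    have hq1 : ∀ x, (u s x * ut u s x + yF (ux u) s x * ux u s x + V x * (yF u s x * u s x)
        - (u₁ x + a x * u₀ x) * u s x + a x * u s x ^ 2)
        = u s x * yF (uxx u) s x + yF (ux u) s x * ux u s x := by
      intro x; rw [hstar s hs0 x]; ring
    rw [integral_congr_ae (Filter.Eventually.of_forall hq1)]
    have hz_sp : ∀ x, B < |x| → yF (ux u) s x = 0 := fun x hx =>
      yF_zero fun σ hσ => hux_sp σ (hsub hσ) x hx
    have e1 : (∫ x, u s x * yF (uxx u) s x) = - ∫ x, ux u s x * yF (ux u) s x := by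
      have eA : ∀ x, u s x * yF (uxx u) s x = ∫ σ in (0:ℝ)..s, u s x * uxx u σ x := fun x =>
        (intervalIntegral.integral_const_mul _ _).symm
      rw [integral_congr_ae (Filter.Eventually.of_forall eA)]
      rw [← myswap (R' := B+1) hs0 ((cus.comp continuous_snd).mul cuxx)
        (fun σ hσ x hx => by
          rw [hu_sp s hsmem x (hnotJ x hx), zero_mul])]
      have eB : (∫ σ in (0:ℝ)..s, ∫ x, u s x * uxx u σ x)
          = ∫ σ in (0:ℝ)..s, -(∫ x, ux u s x * ux u σ x) := by
        apply intervalIntegral.integral_congr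
        intro σ hσ
        have hσ' : σ ∈ Set.Icc (0:ℝ) t₀ := hsub hσ
        exact my_ibp (fun x => hux s x) (fun x => huxx σ x)
          (intJ _ (cus.mul (sl2 _ cuxx σ))
            (fun x hx => by rw [hu_sp s hsmem x hx, zero_mul]))
          (intJ _ (cuxs.mul (sl2 _ cux σ))
            (fun x hx => by rw [hux_sp s hsmem x hx, zero_mul]))
          (intJ _ (cus.mul (sl2 _ cux σ))
            (fun x hx => by rw [hu_sp s hsmem x hx, zero_mul]))
      rw [eB, intervalIntegral.integral_neg]
      congr 1
      rw [myswap (R' := B+1) hs0 ((cuxs.comp continuous_snd).mul cux)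
        (fun σ hσ x hx => by rw [hux_sp s hsmem x (hnotJ x hx), zero_mul])]
      exact integral_congr_ae (Filter.Eventually.of_forall fun x =>
        intervalIntegral.integral_const_mul _ _)
    rw [integral_add
      (intJ _ (show Continuous fun x => u s x * yF (uxx u) s x from cus.mul cZ2s) (fun x hx => by rw [hu_sp s hsmem x hx, zero_mul]))
      (intJ _ (show Continuous fun x => yF (ux u) s x * ux u s x from czs.mul cuxs) (fun x hx => by rw [hz_sp x hx, zero_mul])), e1]
    have e2 : (∫ x, ux u s x * yF (ux u) s x) = ∫ x, yF (ux u) s x * ux u s x :=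
      integral_congr_ae (Filter.Eventually.of_forall fun x => mul_comm _ _)
    rw [e2]; ring
  have ht₀mem : t₀ ∈ Set.Icc (0:ℝ) t₀ := ⟨ht₀pos.le, le_refl t₀⟩
  have hsubT : Set.uIcc (0:ℝ) t₀ ⊆ Set.Icc 0 t₀ := by
    rw [Set.uIcc_of_le ht₀pos.le]
  have hyt_sp : ∀ x, B < |x| → yF u t₀ x = 0 := fun x hx =>
    yF_zero fun σ hσ => hu_sp σ (hsubT hσ) x hx
  have hzt_sp : ∀ x, B < |x| → yF (ux u) t₀ x = 0 := fun x hx =>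
    yF_zero fun σ hσ => hux_sp σ (hsubT hσ) x hx
  -- pointwise evaluation of the time integral of G
  have hmid : ∀ x, (∫ s in (0:ℝ)..t₀,
      (u s x * ut u s x + yF (ux u) s x * ux u s x + V x * (yF u s x * u s x)
        - (u₁ x + a x * u₀ x) * u s x + a x * u s x ^ 2))
      = (1/2) * u t₀ x ^ 2 - (1/2) * u₀ x ^ 2 + (1/2) * yF (ux u) t₀ x ^ 2
        + (V x * yF u t₀ x ^ 2 / 2 - (u₁ x + a x * u₀ x) * yF u t₀ x)
        + ∫ s in (0:ℝ)..t₀, a x * u s x ^ 2 := by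
    intro x
    have cT1 : Continuous fun s => u s x * ut u s x := (sl1 _ cu x).mul (sl1 _ cut x)
    have cT2 : Continuous fun s => yF (ux u) s x * ux u s x := (sl1 _ cz x).mul (sl1 _ cux x)
    have cT3 : Continuous fun s => V x * (yF u s x * u s x) :=
      continuous_const.mul ((sl1 _ cy x).mul (sl1 _ cu x))
    have cT4 : Continuous fun s => (u₁ x + a x * u₀ x) * u s x :=
      continuous_const.mul (sl1 _ cu x)
    have cT5 : Continuous fun s => a x * u s x ^ 2 :=
      continuous_const.mul ((sl1 _ cu x).pow 2)
    have hy0 : yF u 0 x = 0 := intervalIntegral.integral_same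
    have hz0 : yF (ux u) 0 x = 0 := intervalIntegral.integral_same
    have f1 : (∫ s in (0:ℝ)..t₀, u s x * ut u s x)
        = (1/2) * u t₀ x ^ 2 - (1/2) * u₀ x ^ 2 := by
      have hd : ∀ s, HasDerivAt (fun τ => u τ x * u τ x / 2) (u s x * ut u s x) s := by
        intro s
        have h : HasDerivAt (fun τ => u τ x * u τ x / 2) _ s := ((hut s x).mul (hut s x)).div_const 2
        convert h using 1
        ring
      rw [intervalIntegral.integral_eq_sub_of_hasDerivAt (fun s _ => hd s)
        (cT1.intervalIntegrable _ _), hu0 x]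
      ring
    have f2 : (∫ s in (0:ℝ)..t₀, yF (ux u) s x * ux u s x)
        = (1/2) * yF (ux u) t₀ x ^ 2 := by
      have hd : ∀ s, HasDerivAt (fun τ => yF (ux u) τ x * yF (ux u) τ x / 2)
          (yF (ux u) s x * ux u s x) s := by
        intro s
        have h : HasDerivAt (fun τ => yF (ux u) τ x * yF (ux u) τ x / 2) _ s := ((yF_hasDeriv cux s x).mul (yF_hasDeriv cux s x)).div_const 2
        convert h using 1
        ring
      rw [intervalIntegral.integral_eq_sub_of_hasDerivAt (fun s _ => hd s)
        (cT2.intervalIntegrable _ _), hz0]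
      ring
    have f3 : (∫ s in (0:ℝ)..t₀, V x * (yF u s x * u s x))
        = V x * yF u t₀ x ^ 2 / 2 := by
      have hd : ∀ s, HasDerivAt (fun τ => V x * (yF u τ x * yF u τ x) / 2)
          (V x * (yF u s x * u s x)) s := by
        intro s
        have h : HasDerivAt (fun τ => V x * (yF u τ x * yF u τ x) / 2) _ s := (((yF_hasDeriv cu s x).mul (yF_hasDeriv cu s x)).const_mul (V x)).div_const 2
        convert h using 1
        ring
      rw [intervalIntegral.integral_eq_sub_of_hasDerivAt (fun s _ => hd s)
        (cT3.intervalIntegrable _ _), hy0]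
      ring
    have f4 : (∫ s in (0:ℝ)..t₀, (u₁ x + a x * u₀ x) * u s x)
        = (u₁ x + a x * u₀ x) * yF u t₀ x := by
      rw [intervalIntegral.integral_const_mul]
      rfl
    have isplit : (∫ s in (0:ℝ)..t₀,
        (u s x * ut u s x + yF (ux u) s x * ux u s x + V x * (yF u s x * u s x)
          - (u₁ x + a x * u₀ x) * u s x + a x * u s x ^ 2))
        = (((((∫ s in (0:ℝ)..t₀, u s x * ut u s x)
            + ∫ s in (0:ℝ)..t₀, yF (ux u) s x * ux u s x)
            + ∫ s in (0:ℝ)..t₀, V x * (yF u s x * u s x))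
            - ∫ s in (0:ℝ)..t₀, (u₁ x + a x * u₀ x) * u s x)
            + ∫ s in (0:ℝ)..t₀, a x * u s x ^ 2) := by
      rw [intervalIntegral.integral_add ((((cT1.intervalIntegrable _ _).add
          (cT2.intervalIntegrable _ _)).add (cT3.intervalIntegrable _ _)).sub
          (cT4.intervalIntegrable _ _)) (cT5.intervalIntegrable _ _),
        intervalIntegral.integral_sub (((cT1.intervalIntegrable _ _).add
          (cT2.intervalIntegrable _ _)).add (cT3.intervalIntegrable _ _))
          (cT4.intervalIntegrable _ _),
        intervalIntegral.integral_add ((cT1.intervalIntegrable _ _).add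
          (cT2.intervalIntegrable _ _)) (cT3.intervalIntegrable _ _),
        intervalIntegral.integral_add (cT1.intervalIntegrable _ _)
          (cT2.intervalIntegrable _ _)]
    rw [isplit, f1, f2, f3, f4]
    ring
  -- global continuity and support of G
  have cu₀ : Continuous u₀ := hu₀s.continuous
  have cu₁ : Continuous u₁ := hu₁s.continuous
  have cV : Continuous V := hV.continuous
  have hGcont : Continuous (fun p : ℝ × ℝ =>
      (u p.1 p.2 * ut u p.1 p.2 + yF (ux u) p.1 p.2 * ux u p.1 p.2
        + V p.2 * (yF u p.1 p.2 * u p.1 p.2)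
        - (u₁ p.2 + a p.2 * u₀ p.2) * u p.1 p.2 + a p.2 * u p.1 p.2 ^ 2)) :=
    ((((cu.mul cut).add (cz.mul cux)).add
      ((cV.comp continuous_snd).mul (cy.mul cu))).sub
      (((cu₁.comp continuous_snd).add
        ((ha_cont.comp continuous_snd).mul (cu₀.comp continuous_snd))).mul cu)).add
      ((ha_cont.comp continuous_snd).mul (cu.pow 2))
  have hGsupp : ∀ s ∈ Set.Icc (0:ℝ) t₀, ∀ x, x ∉ Set.Icc (-(B+1)) (B+1) →
      (u s x * ut u s x + yF (ux u) s x * ux u s x + V x * (yF u s x * u s x)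
        - (u₁ x + a x * u₀ x) * u s x + a x * u s x ^ 2) = 0 := by
    intro s hs x hx
    have hsub : Set.uIcc (0:ℝ) s ⊆ Set.Icc 0 t₀ := by
      rw [Set.uIcc_of_le hs.1]; exact Set.Icc_subset_Icc le_rfl hs.2
    have h1 := hu_sp s hs x (hnotJ x hx)
    have h2 : yF u s x = 0 := yF_zero fun σ hσ => hu_sp σ (hsub hσ) x (hnotJ x hx)
    have h3 : yF (ux u) s x = 0 := yF_zero fun σ hσ => hux_sp σ (hsub hσ) x (hnotJ x hx)
    rw [h1, h2, h3]
    ring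
  have hswapG := myswap (R' := B+1) ht₀pos.le hGcont hGsupp
  have hL : (∫ s in (0:ℝ)..t₀, ∫ x,
      (u s x * ut u s x + yF (ux u) s x * ux u s x + V x * (yF u s x * u s x)
        - (u₁ x + a x * u₀ x) * u s x + a x * u s x ^ 2)) = 0 := by
    rw [intervalIntegral.integral_congr (g := fun _ => (0:ℝ))
      (fun s hs => hD s (by rw [Set.uIcc_of_le ht₀pos.le] at hs; exact hs))]
    simp
  have hmaster : (∫ x, ((1/2) * u t₀ x ^ 2 - (1/2) * u₀ x ^ 2 + (1/2) * yF (ux u) t₀ x ^ 2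
      + (V x * yF u t₀ x ^ 2 / 2 - (u₁ x + a x * u₀ x) * yF u t₀ x)
      + ∫ s in (0:ℝ)..t₀, a x * u s x ^ 2)) = 0 := by
    rw [← integral_congr_ae (Filter.Eventually.of_forall hmid), ← hswapG, hL]
  -- integrability of the summands
  have iA1 : Integrable fun x => (1/2) * u t₀ x ^ 2 :=
    intJ _ (continuous_const.mul ((sl2 _ cu t₀).pow 2))
      (fun x hx => by rw [hu_sp t₀ ht₀mem x hx]; ring)
  have iA2 : Integrable fun x => (1/2) * u₀ x ^ 2 :=
    intJ _ (continuous_const.mul (cu₀.pow 2)) (fun x hx => by rw [hu₀_sp x hx]; ring)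
  have iA3 : Integrable fun x => (1/2) * yF (ux u) t₀ x ^ 2 :=
    intJ _ (continuous_const.mul ((sl2 _ cz t₀).pow 2))
      (fun x hx => by rw [hzt_sp x hx]; ring)
  have iA4 : Integrable fun x => V x * yF u t₀ x ^ 2 / 2
      - (u₁ x + a x * u₀ x) * yF u t₀ x :=
    intJ _ (((cV.mul ((sl2 _ cy t₀).pow 2)).div_const 2).sub
      ((cu₁.add (ha_cont.mul cu₀)).mul (sl2 _ cy t₀)))
      (fun x hx => by rw [hyt_sp x hx]; ring)
  have cG5 : Continuous (fun p : ℝ × ℝ => a p.2 * u p.1 p.2 ^ 2) :=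
    (ha_cont.comp continuous_snd).mul (cu.pow 2)
  have iA5 : Integrable fun x => ∫ s in (0:ℝ)..t₀, a x * u s x ^ 2 := by
    refine intJ _ (sl2 _ (yF_cont cG5) t₀) ?_
    intro x hx
    refine yF_zero (g := fun s x => a x * u s x ^ 2) ?_
    intro σ hσ
    show a x * u σ x ^ 2 = 0
    rw [hu_sp σ (hsubT hσ) x hx]; ring
  have hsplit : (∫ x, ((1/2) * u t₀ x ^ 2 - (1/2) * u₀ x ^ 2 + (1/2) * yF (ux u) t₀ x ^ 2
      + (V x * yF u t₀ x ^ 2 / 2 - (u₁ x + a x * u₀ x) * yF u t₀ x)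
      + ∫ s in (0:ℝ)..t₀, a x * u s x ^ 2))
      = (∫ x, (1/2) * u t₀ x ^ 2) - (∫ x, (1/2) * u₀ x ^ 2)
        + (∫ x, (1/2) * yF (ux u) t₀ x ^ 2)
        + (∫ x, (V x * yF u t₀ x ^ 2 / 2 - (u₁ x + a x * u₀ x) * yF u t₀ x))
        + ∫ x, ∫ s in (0:ℝ)..t₀, a x * u s x ^ 2 := by
    have iS1 : Integrable fun x => (1/2) * u t₀ x ^ 2 - (1/2) * u₀ x ^ 2 := iA1.sub iA2
    have iS2 : Integrable fun x => (1/2) * u t₀ x ^ 2 - (1/2) * u₀ x ^ 2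
        + (1/2) * yF (ux u) t₀ x ^ 2 := iS1.add iA3
    have iS3 : Integrable fun x => (1/2) * u t₀ x ^ 2 - (1/2) * u₀ x ^ 2
        + (1/2) * yF (ux u) t₀ x ^ 2
        + (V x * yF u t₀ x ^ 2 / 2 - (u₁ x + a x * u₀ x) * yF u t₀ x) := iS2.add iA4
    rw [integral_add iS3 iA5, integral_add iS2 iA4, integral_add iS1 iA3,
      integral_sub iA1 iA2]
  rw [hsplit] at hmaster
  -- identify the damping term
  have hB : (∫ s in Set.Icc (0:ℝ) t₀, ∫ x, a x * u s x ^ 2)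
      = ∫ x, ∫ s in (0:ℝ)..t₀, a x * u s x ^ 2 := by
    rw [MeasureTheory.integral_Icc_eq_integral_Ioc, ← intervalIntegral.integral_of_le ht₀pos.le]
    exact myswap (R' := B+1) ht₀pos.le cG5
      (fun s hs x hx => by rw [hu_sp s hs x (hnotJ x hx)]; ring)
  -- the quadratic bound
  have int2 : Integrable fun x => (u₁ x + a x * u₀ x) ^ 2 / (2 * V x) := by
    refine intJ _ (Continuous.div ((cu₁.add (ha_cont.mul cu₀)).pow 2)
      (continuous_const.mul cV) (fun x => by have := hV_pos x; positivity)) ?_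
    intro x hx
    rw [hu₀_sp x hx, hu₁_sp x hx]
    simp
  have hquad : -(∫ x, (V x * yF u t₀ x ^ 2 / 2 - (u₁ x + a x * u₀ x) * yF u t₀ x))
      ≤ (1/2) * ∫ x, (u₁ x + a x * u₀ x) ^ 2 / V x := by
    rw [← integral_neg]
    have hle : (∫ x, -(V x * yF u t₀ x ^ 2 / 2 - (u₁ x + a x * u₀ x) * yF u t₀ x))
        ≤ ∫ x, (u₁ x + a x * u₀ x) ^ 2 / (2 * V x) := by
      apply integral_mono iA4.neg int2
      intro x
      have hv := hV_pos x
      show -(V x * yF u t₀ x ^ 2 / 2 - (u₁ x + a x * u₀ x) * yF u t₀ x)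
          ≤ (u₁ x + a x * u₀ x) ^ 2 / (2 * V x)
      rw [le_div_iff₀ (by positivity : (0:ℝ) < 2 * V x)]
      nlinarith [sq_nonneg ((u₁ x + a x * u₀ x) - V x * yF u t₀ x)]
    have heq : (∫ x, (u₁ x + a x * u₀ x) ^ 2 / (2 * V x))
        = (1/2) * ∫ x, (u₁ x + a x * u₀ x) ^ 2 / V x := by
      rw [← integral_const_mul]
      apply integral_congr_ae (Filter.Eventually.of_forall fun x => ?_)
      have hv : V x ≠ 0 := (hV_pos x).ne'
      field_simp
    linarith
  have hA3nn : 0 ≤ ∫ x, (1/2) * yF (ux u) t₀ x ^ 2 :=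
    integral_nonneg fun x => by positivity
  have hBnn : 0 ≤ ∫ s in Set.Icc (0:ℝ) t₀, ∫ x, a x * u s x ^ 2 :=
    setIntegral_nonneg measurableSet_Icc fun s _ =>
      integral_nonneg fun x => mul_nonneg (ha_nonneg x) (sq_nonneg _)
  have e_half1 : (∫ x, (1/2) * u t₀ x ^ 2) = (1/2) * ∫ x, u t₀ x ^ 2 :=
    integral_const_mul _ _
  have e_half2 : (∫ x, (1/2) * u₀ x ^ 2) = (1/2) * ∫ x, u₀ x ^ 2 :=
    integral_const_mul _ _
  rw [e_half1, e_half2, ← hB] at hmaster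
  constructor
  · linarith
  · linarith
end
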